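/- arXiv:1202.0964 — 4 statements merged into one kernel-verified Lean document; each statement's English description precedes it below -/
import Mathlib

section
/- Let 1 ≤ k < n and let G be a simple graph of order n whose complement has at least k balanced bipartite components. Then n − 2 is an eigenvalue of Q(G) with multiplicity at least k, and in particular q_{k+1}(G) = n − 2. -/
open Matrix SimpleGraph
open scoped Classical

/-- The `k`-th largest eigenvalue (1-indexed, counted with multiplicity) of a real
symmetric (Hermitian) matrix; junk value `0` if `M` is not Hermitian or `k` is out of range. -/
noncomputable def kthEig {V : Type*} [Fintype V] [DecidableEq V]
    (M : Matrix V V ℝ) (k : ℕ) : ℝ :=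
  if hM : M.IsHermitian then
    if h : k - 1 < Fintype.card V then
      letI f : Fin (Fintype.card V) → ℝ := hM.eigenvalues ∘ (Fintype.equivFin V).symm
      (f ∘ Tuple.sort f) (Fin.rev ⟨k - 1, h⟩)
    else 0
  else 0

/-- The signless Laplacian `Q(G) = D(G) + A(G)` of a simple graph `G`. -/
noncomputable def signlessLap {V : Type*} [Fintype V] [DecidableEq V]
    (G : SimpleGraph V) [DecidableRel G.Adj] : Matrix V V ℝ :=
  G.degMatrix ℝ + G.adjMatrix ℝ

/-- `qEig G k` is the `k`-th largest signless Laplacian eigenvalue `q_k(G)`. -/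
noncomputable def qEig {V : Type*} [Fintype V] [DecidableEq V]
    (G : SimpleGraph V) [DecidableRel G.Adj] (k : ℕ) : ℝ :=
  kthEig (signlessLap G) k

/-- `c` is a bipartite connected component of `H`: the vertex set of the component splits
into two disjoint classes `U`, `W` such that every edge of the component joins `U` and `W`. -/
def IsBipartiteComponent {V : Type*} (H : SimpleGraph V) (c : H.ConnectedComponent) : Prop :=
  ∃ U W : Set V, U ∪ W = c.supp ∧ Disjoint U W ∧
    ∀ ⦃u v : V⦄, u ∈ c.supp → H.Adj u v → (u ∈ U ∧ v ∈ W) ∨ (u ∈ W ∧ v ∈ U)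

/-- `c` is a balanced bipartite connected component of `H`: bipartite with vertex classes
of equal size. -/
def IsBalancedBipartiteComponent {V : Type*} (H : SimpleGraph V)
    (c : H.ConnectedComponent) : Prop :=
  ∃ U W : Set V, U ∪ W = c.supp ∧ Disjoint U W ∧ U.ncard = W.ncard ∧
    ∀ ⦃u v : V⦄, u ∈ c.supp → H.Adj u v → (u ∈ U ∧ v ∈ W) ∨ (u ∈ W ∧ v ∈ U)

/-- `G` is the complete multipartite graph whose parts are the fibers of `p`:
two vertices are adjacent iff they lie in different parts. -/
def IsCompleteMultipartiteWith {V ι : Type*} (G : SimpleGraph V) (p : V → ι) : Prop :=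
  ∀ u v : V, G.Adj u v ↔ p u ≠ p v

section Aux
set_option linter.unusedSectionVars false
variable {V : Type*} [Fintype V] [DecidableEq V]

lemma dot_sum' {ι : Type*} (s : Finset ι) (x : V → ℝ) (w : ι → V → ℝ) :
    x ⬝ᵥ (∑ i ∈ s, w i) = ∑ i ∈ s, x ⬝ᵥ w i := by
  unfold dotProduct
  rw [Finset.sum_comm]
  congr 1; ext v
  simp [Finset.mul_sum]

lemma mulVec_sumv' {ι : Type*} (s : Finset ι) (A : Matrix V V ℝ) (w : ι → V → ℝ) :
    A *ᵥ (∑ i ∈ s, w i) = ∑ i ∈ s, A *ᵥ w i := by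
  ext v
  simp only [mulVec, Finset.sum_apply]
  rw [dot_sum']

lemma signlessLap_mulVec_apply (H : SimpleGraph V) [DecidableRel H.Adj] (z : V → ℝ) (v : V) :
    (signlessLap H *ᵥ z) v = ∑ u ∈ H.neighborFinset v, (z v + z u) := by
  rw [signlessLap, add_mulVec]
  simp only [Pi.add_apply, degMatrix_mulVec_apply, adjMatrix_mulVec_apply,
    Finset.sum_add_distrib, Finset.sum_const, nsmul_eq_mul]
  rw [SimpleGraph.degree]

lemma signlessLap_form (H : SimpleGraph V) [DecidableRel H.Adj] (z : V → ℝ) :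
    z ⬝ᵥ (signlessLap H *ᵥ z)
      = ∑ v, ∑ u, (if H.Adj v u then z v ^ 2 + z v * z u else 0) := by
  unfold dotProduct
  refine Finset.sum_congr rfl fun v _ => ?_
  rw [signlessLap_mulVec_apply, Finset.mul_sum, neighborFinset_eq_filter,
    Finset.sum_filter]
  refine Finset.sum_congr rfl fun u _ => ?_
  split_ifs <;> ring

lemma signlessLap_form_nonneg (H : SimpleGraph V) [DecidableRel H.Adj] (z : V → ℝ) :
    0 ≤ z ⬝ᵥ (signlessLap H *ᵥ z) := by
  have hsym : z ⬝ᵥ (signlessLap H *ᵥ z)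
      = ∑ v, ∑ u, (if H.Adj u v then z u ^ 2 + z u * z v else 0) := by
    rw [signlessLap_form, Finset.sum_comm]
  have h2 : 2 * (z ⬝ᵥ (signlessLap H *ᵥ z))
      = ∑ v, ∑ u, (if H.Adj v u then (z v + z u) ^ 2 else 0) := by
    rw [two_mul]
    nth_rewrite 1 [signlessLap_form]
    nth_rewrite 1 [hsym]
    rw [← Finset.sum_add_distrib]
    refine Finset.sum_congr rfl fun v _ => ?_
    rw [← Finset.sum_add_distrib]
    refine Finset.sum_congr rfl fun u _ => ?_
    by_cases hadj : H.Adj v u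
    · rw [if_pos hadj, if_pos hadj.symm, if_pos hadj]; ring
    · rw [if_neg hadj, if_neg (fun hh : H.Adj u v => hadj hh.symm), if_neg hadj]; ring
  have hnn : (0:ℝ) ≤ ∑ v, ∑ u : V, (if H.Adj v u then (z v + z u) ^ 2 else 0) :=
    Finset.sum_nonneg fun v _ => Finset.sum_nonneg fun u _ => by
      split_ifs <;> positivity
  linarith

lemma univ_split (G : SimpleGraph V) [DecidableRel G.Adj] (v : V) (w : V → ℝ) :
    ∑ u, w u = w v + (∑ u ∈ G.neighborFinset v, w u)
      + ∑ u ∈ Gᶜ.neighborFinset v, w u := by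
  have hfil : Finset.univ.filter (fun u => ¬ G.Adj v u)
      = insert v (Gᶜ.neighborFinset v) := by
    ext u
    simp only [Finset.mem_filter, Finset.mem_univ, true_and, Finset.mem_insert,
      mem_neighborFinset, compl_adj]
    by_cases hu : u = v
    · subst hu; simp [G.loopless]
    · constructor
      · intro hna; exact Or.inr ⟨fun hvu => hu hvu.symm, hna⟩
      · rintro (h | h); · exact absurd h hu
        · exact h.2
  have h := Finset.sum_filter_add_sum_filter_not Finset.univ (fun u => G.Adj v u) w
  rw [hfil, Finset.sum_insert (by simp), neighborFinset_eq_filter] at h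
  rw [neighborFinset_eq_filter, neighborFinset_eq_filter]
  linarith

lemma signlessLap_compl_mulVec (G : SimpleGraph V) [DecidableRel G.Adj] (z : V → ℝ) (v : V) :
    (signlessLap G *ᵥ z) v
      = ((Fintype.card V : ℝ) - 2) * z v + (∑ u, z u) - (signlessLap Gᶜ *ᵥ z) v := by
  rw [signlessLap_mulVec_apply, signlessLap_mulVec_apply]
  have hsplit := univ_split G v (fun u => z v + z u)
  have hconst : ∑ u : V, (z v + z u) = (Fintype.card V : ℝ) * z v + ∑ u, z u := by
    rw [Finset.sum_add_distrib, Finset.sum_const, Finset.card_univ, nsmul_eq_mul]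
  linarith

lemma signlessLap_isHermitian (G : SimpleGraph V) [DecidableRel G.Adj] :
    (signlessLap G).IsHermitian := by
  rw [Matrix.IsHermitian, conjTranspose_eq_transpose_of_trivial]
  exact (isSymm_degMatrix ℝ G).add (isSymm_adjMatrix G)

lemma dot_mulVec_symm {A : Matrix V V ℝ} (hA : A.IsHermitian) (x y : V → ℝ) :
    x ⬝ᵥ (A *ᵥ y) = (A *ᵥ x) ⬝ᵥ y := by
  have hAt : Aᵀ = A := by
    rw [← conjTranspose_eq_transpose_of_trivial]; exact hA
  rw [dotProduct_mulVec, ← mulVec_transpose, hAt]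

noncomputable def eigfun {Q : Matrix V V ℝ} (hQ : Q.IsHermitian) (i : V) : V → ℝ :=
  WithLp.equiv 2 (V → ℝ) (hQ.eigenvectorBasis i)

lemma mulVec_eigfun {Q : Matrix V V ℝ} (hQ : Q.IsHermitian) (i : V) :
    Q *ᵥ eigfun hQ i = hQ.eigenvalues i • eigfun hQ i :=
  hQ.mulVec_eigenvectorBasis i

lemma inner_eq_dot (x y : EuclideanSpace ℝ V) :
    (inner ℝ x y : ℝ) = (WithLp.equiv 2 (V → ℝ) x) ⬝ᵥ (WithLp.equiv 2 (V → ℝ) y) := by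
  simp [PiLp.inner_apply, RCLike.inner_apply, dotProduct, starRingEnd_apply, mul_comm]

lemma eigfun_dot {Q : Matrix V V ℝ} (hQ : Q.IsHermitian) (i j : V) :
    eigfun hQ i ⬝ᵥ eigfun hQ j = if i = j then 1 else 0 := by
  rw [eigfun, eigfun, ← inner_eq_dot]
  exact orthonormal_iff_ite.mp hQ.eigenvectorBasis.orthonormal i j

lemma eig_expansion {Q : Matrix V V ℝ} (hQ : Q.IsHermitian) (z : V → ℝ) :
    ∑ v, (eigfun hQ v ⬝ᵥ z) • eigfun hQ v = z := by
  have h := (hQ.eigenvectorBasis).sum_repr ((WithLp.equiv 2 (V → ℝ)).symm z)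
  have hrepr : ∀ v, (hQ.eigenvectorBasis).repr ((WithLp.equiv 2 (V → ℝ)).symm z) v
      = eigfun hQ v ⬝ᵥ z := by
    intro v
    rw [OrthonormalBasis.repr_apply_apply, inner_eq_dot]
    rfl
  rw [Finset.sum_congr rfl (fun v _ => by rw [hrepr v])] at h
  have h' := congrArg (WithLp.linearEquiv 2 ℝ (V → ℝ)) h
  rw [map_sum] at h'
  simpa [eigfun] using h'

lemma dot_self_eq_sum {Q : Matrix V V ℝ} (hQ : Q.IsHermitian) (z : V → ℝ) :
    z ⬝ᵥ z = ∑ v, (eigfun hQ v ⬝ᵥ z) ^ 2 := by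
  nth_rewrite 2 [← eig_expansion hQ z]
  rw [dot_sum']
  refine Finset.sum_congr rfl fun v _ => ?_
  rw [dotProduct_smul, smul_eq_mul, dotProduct_comm]
  ring

lemma dot_mulVec_eq_sum {Q : Matrix V V ℝ} (hQ : Q.IsHermitian) (z : V → ℝ) :
    z ⬝ᵥ (Q *ᵥ z) = ∑ v, hQ.eigenvalues v * (eigfun hQ v ⬝ᵥ z) ^ 2 := by
  nth_rewrite 2 [← eig_expansion hQ z]
  rw [mulVec_sumv', dot_sum']
  refine Finset.sum_congr rfl fun v _ => ?_
  rw [mulVec_smul, mulVec_eigfun, dotProduct_smul, dotProduct_smul, smul_eq_mul, smul_eq_mul,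
    dotProduct_comm]
  ring

lemma exists_null_combo {m : ℕ} {ι : Type*} [Fintype ι] (hlt : Fintype.card ι < m)
    (A : Fin m → (ι → ℝ)) :
    ∃ a : Fin m → ℝ, (∃ j, a j ≠ 0) ∧ ∑ j, a j • A j = 0 := by
  have hnli : ¬ LinearIndependent ℝ A := by
    intro hli
    have h1 := hli.fintype_card_le_finrank
    rw [Fintype.card_fin, Module.finrank_pi] at h1
    omega
  rw [Fintype.not_linearIndependent_iff] at hnli
  obtain ⟨g, hg, j, hj⟩ := hnli
  exact ⟨g, ⟨j, hj⟩, hg⟩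

end Aux

section Sorting

lemma card_filter_comp_equiv {α β : Type*} [Fintype α] [Fintype β] [DecidableEq β]
    (e : α ≃ β) (p : β → Prop) [DecidablePred p] :
    (Finset.univ.filter fun a => p (e a)).card = (Finset.univ.filter p).card := by
  refine Finset.card_bij (fun a _ => e a) ?_ ?_ ?_
  · intro a ha; simp only [Finset.mem_filter, Finset.mem_univ, true_and] at ha ⊢; exact ha
  · intro a _ b _ hab; exact e.injective hab
  · intro b hb
    refine ⟨e.symm b, ?_, by simp⟩
    simp only [Finset.mem_filter, Finset.mem_univ, true_and, Equiv.apply_symm_apply] at *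
    exact hb

lemma sorted_eq {N : ℕ} (f : Fin N → ℝ) (t : ℝ) (k : ℕ) (hk : k < N)
    (h1 : k + 1 ≤ (Finset.univ.filter fun i => t ≤ f i).card)
    (h2 : (Finset.univ.filter fun i => t < f i).card ≤ k) :
    (f ∘ Tuple.sort f) (Fin.rev ⟨k, hk⟩) = t := by
  set g : Fin N → ℝ := f ∘ Tuple.sort f with hg
  have hmono : Monotone g := Tuple.monotone_sort f
  set r : Fin N := Fin.rev ⟨k, hk⟩ with hr
  have hrval : (r : ℕ) = N - (k + 1) := by simp [hr, Fin.val_rev]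
  have hcount1 : (Finset.univ.filter fun i => t ≤ g i).card
      = (Finset.univ.filter fun i => t ≤ f i).card :=
    card_filter_comp_equiv (Tuple.sort f) (fun x => t ≤ f x)
  have hcount2 : (Finset.univ.filter fun i => t < g i).card
      = (Finset.univ.filter fun i => t < f i).card :=
    card_filter_comp_equiv (Tuple.sort f) (fun x => t < f x)
  have hger : t ≤ g r := by
    by_contra hlt
    push_neg at hlt
    have hsub : (Finset.univ.filter fun i => t ≤ g i) ⊆ Finset.Ioi r := by
      intro i hi
      simp only [Finset.mem_filter, Finset.mem_univ, true_and] at hi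
      rw [Finset.mem_Ioi]
      by_contra hle
      push_neg at hle
      have := hmono hle
      linarith
    have hcard := Finset.card_le_card hsub
    rw [Fin.card_Ioi] at hcard
    omega
  have hler : g r ≤ t := by
    by_contra hgt
    push_neg at hgt
    have hsub : Finset.Ici r ⊆ (Finset.univ.filter fun i => t < g i) := by
      intro i hi
      rw [Finset.mem_Ici] at hi
      simp only [Finset.mem_filter, Finset.mem_univ, true_and]
      exact lt_of_lt_of_le hgt (hmono hi)
    have hcard := Finset.card_le_card hsub
    rw [Fin.card_Ici] at hcard
    omega
  exact le_antisymm hler hger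

end Sorting

set_option maxHeartbeats 1600000

/-- Let `1 ≤ k < n` and let `G` be a graph of order `n` whose complement has at least `k`
balanced bipartite components. Then `n - 2` is an eigenvalue of `Q(G)` with multiplicity
at least `k`; in particular `q_{k+1}(G) = n - 2`. -/
theorem multiplicity_of_balanced_components (n k : ℕ) (hk1 : 1 ≤ k) (hkn : k < n)
    (G : SimpleGraph (Fin n)) [DecidableRel G.Adj]
    (h : k ≤ {c : Gᶜ.ConnectedComponent | IsBalancedBipartiteComponent Gᶜ c}.ncard) :
    Module.End.HasEigenvalue (Matrix.toLin' (signlessLap G)) ((n : ℝ) - 2) ∧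
    k ≤ Module.finrank ℝ
        (Module.End.eigenspace (Matrix.toLin' (signlessLap G)) ((n : ℝ) - 2)) ∧
    qEig G (k + 1) = (n : ℝ) - 2 := by
  classical
  -- extract k distinct balanced bipartite components
  obtain ⟨S, hSsub, hScard⟩ := Set.exists_subset_card_eq h
  have hSfin : S.Finite := Set.toFinite S
  have hcards : hSfin.toFinset.card = k := by
    rw [← Set.ncard_eq_toFinset_card _ hSfin]; exact hScard
  set e := (Finset.equivFinOfCardEq hcards).symm with he
  set comp : Fin k → Gᶜ.ConnectedComponent := fun i => (e i : Gᶜ.ConnectedComponent) with hcomp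
  have hcompinj : Function.Injective comp := fun i j hij => e.injective (Subtype.ext hij)
  have hbal : ∀ i, IsBalancedBipartiteComponent Gᶜ (comp i) := by
    intro i
    have hmem := (e i).2
    rw [Set.Finite.mem_toFinset] at hmem
    exact hSsub hmem
  choose U W hUW hdisj hcard hbip using hbal
  -- the eigenvectors
  set x : Fin k → (Fin n → ℝ) :=
    fun i v => if v ∈ U i then 1 else if v ∈ W i then -1 else 0 with hx
  have hmemsupp : ∀ i v, v ∈ U i ∪ W i ↔ v ∈ (comp i).supp := fun i v => by rw [hUW i]
  have hWU : ∀ i v, v ∈ U i → v ∉ W i := fun i v hvU hvW =>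
    Set.disjoint_left.mp (hdisj i) hvU hvW
  have hxsupp : ∀ i v, v ∉ (comp i).supp → x i v = 0 := by
    intro i v hv
    have hU : v ∉ U i := fun hU => hv ((hmemsupp i v).mp (Or.inl hU))
    have hW : v ∉ W i := fun hW => hv ((hmemsupp i v).mp (Or.inr hW))
    simp [hx, hU, hW]
  have hcardUW : ∀ (s : Set (Fin n)),
      ((Finset.univ.filter (· ∈ s)).card : ℝ) = s.ncard := by
    intro s
    rw [Set.ncard_eq_toFinset_card' s]
    norm_cast
    congr 1
    ext v; simp
  have hxsum : ∀ i, ∑ v, x i v = 0 := by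
    intro i
    have hsplit : ∀ v, x i v
        = (if v ∈ U i then (1:ℝ) else 0) - (if v ∈ W i then 1 else 0) := by
      intro v
      by_cases hU : v ∈ U i
      · simp [hx, hU, hWU i v hU]
      · by_cases hW : v ∈ W i <;> simp [hx, hU, hW]
    rw [Finset.sum_congr rfl (fun v _ => hsplit v), Finset.sum_sub_distrib,
      Finset.sum_boole, Finset.sum_boole, hcardUW, hcardUW, hcard i, sub_self]
  have hmulH : ∀ i, signlessLap Gᶜ *ᵥ x i = 0 := by
    intro i; funext v
    rw [signlessLap_mulVec_apply]
    show ∑ u ∈ Gᶜ.neighborFinset v, (x i v + x i u) = 0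
    by_cases hv : v ∈ (comp i).supp
    · refine Finset.sum_eq_zero fun u hu => ?_
      rw [mem_neighborFinset] at hu
      rcases hbip i hv hu with ⟨hvU, huW⟩ | ⟨hvW, huU⟩
      · have h1 : x i v = 1 := by simp [hx, hvU]
        have h2 : x i u = -1 := by
          have huU : u ∉ U i := fun hc => hWU i u hc huW
          simp [hx, huU, huW]
        rw [h1, h2]; ring
      · have h1 : x i v = -1 := by
          have hvU : v ∉ U i := fun hc => hWU i v hc hvW
          simp [hx, hvU, hvW]
        have h2 : x i u = 1 := by simp [hx, huU]
        rw [h1, h2]; ring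
    · refine Finset.sum_eq_zero fun u hu => ?_
      rw [mem_neighborFinset] at hu
      have hxu : x i u = 0 := by
        apply hxsupp
        intro husupp
        apply hv
        rw [ConnectedComponent.mem_supp_iff] at husupp ⊢
        rw [← husupp]
        exact ConnectedComponent.sound hu.reachable
      rw [hxsupp i v hv, hxu]; ring
  have hQx : ∀ i, signlessLap G *ᵥ x i = ((n:ℝ) - 2) • x i := by
    intro i; funext v
    rw [signlessLap_compl_mulVec, hxsum i, hmulH i]
    simp [Fintype.card_fin]
  have hmem : ∀ i, x i ∈ Module.End.eigenspace (Matrix.toLin' (signlessLap G)) ((n:ℝ)-2) := by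
    intro i
    rw [Module.End.mem_eigenspace_iff, Matrix.toLin'_apply]
    exact hQx i
  -- nonemptiness and evaluation points
  have hUne : ∀ i, (U i).Nonempty := by
    intro i
    obtain ⟨v0, hv0⟩ := (comp i).exists_rep
    have hv0m : v0 ∈ (comp i).supp := by
      rw [ConnectedComponent.mem_supp_iff]; exact hv0
    rcases (hmemsupp i v0).mpr hv0m with hU | hW
    · exact ⟨v0, hU⟩
    · have hWne : 0 < (W i).ncard :=
        (Set.ncard_pos (Set.toFinite _)).mpr ⟨v0, hW⟩
      rw [← hcard i] at hWne
      exact (Set.ncard_pos (Set.toFinite _)).mp hWne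
  have hptU : ∀ i, (hUne i).choose ∈ U i := fun i => (hUne i).choose_spec
  set pt : Fin k → Fin n := fun i => (hUne i).choose with hpt
  have hptsupp : ∀ i, pt i ∈ (comp i).supp := fun i => (hmemsupp i _).mp (Or.inl (hptU i))
  have hxpt : ∀ i, x i (pt i) = 1 := fun i => by simp [hx, show pt i ∈ U i from hptU i]
  have hxother : ∀ i j, j ≠ i → x j (pt i) = 0 := by
    intro i j hji
    apply hxsupp
    intro hmem'
    rw [ConnectedComponent.mem_supp_iff] at hmem'
    have h2 := (ConnectedComponent.mem_supp_iff _ _).mp (hptsupp i)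
    exact hji (hcompinj (hmem'.symm.trans h2))
  have hLI : LinearIndependent ℝ x := by
    rw [Fintype.linearIndependent_iff]
    intro g hg i
    have hgi := congrFun hg (pt i)
    simp only [Finset.sum_apply, Pi.smul_apply, smul_eq_mul, Pi.zero_apply] at hgi
    rw [Finset.sum_eq_single i (fun j _ hj => by rw [hxother i j hj, mul_zero])
      (fun hi => absurd (Finset.mem_univ i) hi)] at hgi
    rw [hxpt i, mul_one] at hgi
    exact hgi
  have hfinrank : k ≤ Module.finrank ℝ
      (Module.End.eigenspace (Matrix.toLin' (signlessLap G)) ((n:ℝ)-2)) := by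
    have hLI' : LinearIndependent ℝ (fun i =>
        (⟨x i, hmem i⟩ : Module.End.eigenspace (Matrix.toLin' (signlessLap G)) ((n:ℝ)-2))) := by
      apply LinearIndependent.of_comp
        (Module.End.eigenspace (Matrix.toLin' (signlessLap G)) ((n:ℝ)-2)).subtype
      exact hLI
    simpa using hLI'.fintype_card_le_finrank
  set i0 : Fin k := ⟨0, hk1⟩ with hi0
  have hx0ne : x i0 ≠ 0 := by
    intro h0
    have := congrFun h0 (pt i0)
    rw [hxpt i0] at this
    simpa using this
  have hHasEig : Module.End.HasEigenvalue (Matrix.toLin' (signlessLap G)) ((n:ℝ)-2) :=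
    Module.End.hasEigenvalue_of_hasEigenvector ⟨hmem i0, hx0ne⟩
  refine ⟨hHasEig, hfinrank, ?_⟩
  -- Part 3 : the (k+1)-st largest eigenvalue equals n - 2
  have hQherm : (signlessLap G).IsHermitian := signlessLap_isHermitian G
  set f : Fin n → ℝ := hQherm.eigenvalues with hf
  -- the vector y : indicator of the component of i0
  set y : Fin n → ℝ := fun v => if v ∈ U i0 ∪ W i0 then 1 else 0 with hy
  have hy01 : ∀ v, y v = 0 ∨ y v = 1 := by
    intro v
    rw [hy]
    by_cases hv : v ∈ U i0 ∪ W i0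
    · right; exact if_pos hv
    · left; exact if_neg hv
  have hysum : ∑ v, y v = ((U i0).ncard : ℝ) + ((W i0).ncard : ℝ) := by
    have hfil : Finset.univ.filter (· ∈ U i0 ∪ W i0)
        = Finset.univ.filter (· ∈ U i0) ∪ Finset.univ.filter (· ∈ W i0) := by
      ext v; simp [Set.mem_union]
    rw [hy, Finset.sum_boole, hfil, Finset.card_union_of_disjoint, Nat.cast_add,
      hcardUW, hcardUW]
    rw [Finset.disjoint_filter]
    intro v _ hvU
    exact hWU i0 v hvU
  have hUpos : (0:ℝ) < (U i0).ncard := by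
    have := (Set.ncard_pos (Set.toFinite (U i0))).mpr (hUne i0)
    exact_mod_cast this
  have hysumpos : 0 < ∑ v, y v := by
    rw [hysum]
    have h2 : (0:ℝ) ≤ ((W i0).ncard : ℝ) := Nat.cast_nonneg _
    linarith
  -- dot products among the x's and y
  have hxy0 : x i0 ⬝ᵥ y = 0 := by
    have hterm : ∀ v, x i0 v * y v = x i0 v := by
      intro v
      by_cases hv : v ∈ U i0 ∪ W i0
      · rw [show y v = 1 from if_pos hv, mul_one]
      · rw [hxsupp i0 v (fun hc => hv ((hmemsupp i0 v).mpr hc)), zero_mul]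
    rw [dotProduct, Finset.sum_congr rfl fun v _ => hterm v]
    exact hxsum i0
  have hxysupp : ∀ i, i ≠ i0 → x i ⬝ᵥ y = 0 := by
    intro i hi
    rw [dotProduct]
    refine Finset.sum_eq_zero fun v _ => ?_
    by_cases hv : v ∈ U i0 ∪ W i0
    · have hvsupp : v ∈ (comp i0).supp := (hmemsupp i0 v).mp hv
      have hxv : x i v = 0 := by
        apply hxsupp
        intro hvsupp'
        rw [ConnectedComponent.mem_supp_iff] at hvsupp hvsupp'
        exact hi (hcompinj (hvsupp'.symm.trans hvsupp))
      rw [hxv, zero_mul]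
    · rw [show y v = 0 from if_neg hv, mul_zero]
  have hxiy : ∀ i, x i ⬝ᵥ y = 0 := by
    intro i
    by_cases hii0 : i = i0
    · subst hii0; exact hxy0
    · exact hxysupp i hii0
  have hxx0 : ∀ i j, i ≠ j → x i ⬝ᵥ x j = 0 := by
    intro i j hij
    rw [dotProduct]
    refine Finset.sum_eq_zero fun v _ => ?_
    by_cases hv : v ∈ (comp i).supp
    · have hxv : x j v = 0 := by
        apply hxsupp
        intro hv'
        rw [ConnectedComponent.mem_supp_iff] at hv hv'
        exact hij (hcompinj (hv.symm.trans hv'))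
      rw [hxv, mul_zero]
    · rw [hxsupp i v hv, zero_mul]
  have hxxpos : ∀ i, 0 < x i ⬝ᵥ x i := by
    intro i
    rw [dotProduct]
    have hle : (1:ℝ) ≤ ∑ v, x i v * x i v := by
      have h1 : x i (pt i) * x i (pt i) = 1 := by rw [hxpt i]; ring
      rw [← h1]
      exact Finset.single_le_sum (fun v _ => mul_self_nonneg (x i v)) (Finset.mem_univ _)
    linarith
  have hyypos : 0 < y ⬝ᵥ y := by
    have hterm : ∀ v, y v * y v = y v := by
      intro v
      rcases hy01 v with h0 | h1
      · rw [h0]; ring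
      · rw [h1]; ring
    rw [dotProduct, Finset.sum_congr rfl fun v _ => hterm v]
    exact hysumpos
  -- the quadratic form bound for y
  have hyform : y ⬝ᵥ (signlessLap Gᶜ *ᵥ y) ≤ (∑ v, y v) ^ 2 := by
    rw [signlessLap_form]
    have hbound : ∀ v u : Fin n, (if Gᶜ.Adj v u then y v ^ 2 + y v * y u else 0)
        ≤ 2 * ((if v ∈ U i0 then (1:ℝ) else 0) * (if u ∈ W i0 then 1 else 0)
            + (if v ∈ W i0 then (1:ℝ) else 0) * (if u ∈ U i0 then 1 else 0)) := by
      intro v u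
      have h1 : (0:ℝ) ≤ (if v ∈ U i0 then (1:ℝ) else 0) * (if u ∈ W i0 then 1 else 0) := by
        split_ifs <;> norm_num
      have h2 : (0:ℝ) ≤ (if v ∈ W i0 then (1:ℝ) else 0) * (if u ∈ U i0 then 1 else 0) := by
        split_ifs <;> norm_num
      by_cases hadj : Gᶜ.Adj v u
      · rw [if_pos hadj]
        by_cases hv : v ∈ U i0 ∪ W i0
        · have hvsupp : v ∈ (comp i0).supp := (hmemsupp i0 v).mp hv
          rcases hbip i0 hvsupp hadj with ⟨hvU, huW⟩ | ⟨hvW, huU⟩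
          · have hyv : y v = 1 := if_pos (Set.mem_union_left _ hvU)
            have hyu : y u = 1 := if_pos (Set.mem_union_right _ huW)
            rw [hyv, hyu, if_pos hvU, if_pos huW]
            nlinarith
          · have hyv : y v = 1 := if_pos (Set.mem_union_right _ hvW)
            have hyu : y u = 1 := if_pos (Set.mem_union_left _ huU)
            rw [hyv, hyu, if_pos hvW, if_pos huU]
            nlinarith
        · have hyv : y v = 0 := if_neg hv
          rw [hyv]
          nlinarith
      · rw [if_neg hadj]
        linarith
    have hsum1 : ∑ v, ∑ u, (if Gᶜ.Adj v u then y v ^ 2 + y v * y u else 0)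
        ≤ ∑ v, ∑ u : Fin n, 2 * ((if v ∈ U i0 then (1:ℝ) else 0) * (if u ∈ W i0 then 1 else 0)
            + (if v ∈ W i0 then (1:ℝ) else 0) * (if u ∈ U i0 then 1 else 0)) :=
      Finset.sum_le_sum fun v _ => Finset.sum_le_sum fun u _ => hbound v u
    have hUs : ∑ v, (if v ∈ U i0 then (1:ℝ) else 0) = ((U i0).ncard : ℝ) := by
      rw [Finset.sum_boole, hcardUW]
    have hWs : ∑ v, (if v ∈ W i0 then (1:ℝ) else 0) = ((W i0).ncard : ℝ) := by
      rw [Finset.sum_boole, hcardUW]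
    have hsum2 : ∑ v, ∑ u : Fin n, 2 * ((if v ∈ U i0 then (1:ℝ) else 0) * (if u ∈ W i0 then 1 else 0)
            + (if v ∈ W i0 then (1:ℝ) else 0) * (if u ∈ U i0 then 1 else 0))
        = 4 * ((U i0).ncard : ℝ) * ((W i0).ncard : ℝ) := by
      have key : ∑ v, ∑ u : Fin n, 2 * ((if v ∈ U i0 then (1:ℝ) else 0) * (if u ∈ W i0 then 1 else 0)
            + (if v ∈ W i0 then (1:ℝ) else 0) * (if u ∈ U i0 then 1 else 0))
          = 2 * ((∑ v, (if v ∈ U i0 then (1:ℝ) else 0)) * (∑ u, (if u ∈ W i0 then (1:ℝ) else 0))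
            + (∑ v, (if v ∈ W i0 then (1:ℝ) else 0)) * (∑ u, (if u ∈ U i0 then (1:ℝ) else 0))) := by
        rw [Finset.sum_mul_sum, Finset.sum_mul_sum, ← Finset.sum_add_distrib, Finset.mul_sum]
        refine Finset.sum_congr rfl fun v _ => ?_
        rw [← Finset.sum_add_distrib, Finset.mul_sum]
      rw [key, hUs, hWs]
      ring
    have h4 : 4 * ((U i0).ncard:ℝ) * ((W i0).ncard:ℝ) ≤ (∑ v, y v)^2 := by
      rw [hysum]
      nlinarith [sq_nonneg (((U i0).ncard:ℝ) - ((W i0).ncard:ℝ))]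
    linarith
  -- the quadratic form identity relating G and its complement
  have hQHherm : (signlessLap Gᶜ).IsHermitian := signlessLap_isHermitian Gᶜ
  have hdotQ : ∀ z : Fin n → ℝ, z ⬝ᵥ (signlessLap G *ᵥ z)
      = ((n : ℝ) - 2) * (z ⬝ᵥ z) + (∑ u, z u)^2 - z ⬝ᵥ (signlessLap Gᶜ *ᵥ z) := by
    intro z
    have hterm : ∀ v, z v * (signlessLap G *ᵥ z) v
        = ((n:ℝ)-2) * (z v * z v) + z v * (∑ u, z u) - z v * (signlessLap Gᶜ *ᵥ z) v := by
      intro v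
      rw [signlessLap_compl_mulVec, Fintype.card_fin]
      ring
    calc z ⬝ᵥ (signlessLap G *ᵥ z) = ∑ v, z v * (signlessLap G *ᵥ z) v := rfl
      _ = ∑ v, (((n:ℝ)-2) * (z v * z v) + z v * (∑ u, z u) - z v * (signlessLap Gᶜ *ᵥ z) v) :=
          Finset.sum_congr rfl fun v _ => hterm v
      _ = ((n : ℝ) - 2) * (z ⬝ᵥ z) + (∑ u, z u)^2 - z ⬝ᵥ (signlessLap Gᶜ *ᵥ z) := by
          rw [Finset.sum_sub_distrib, Finset.sum_add_distrib, ← Finset.mul_sum,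
            ← Finset.sum_mul]
          rw [show z ⬝ᵥ z = ∑ v, z v * z v from rfl,
            show z ⬝ᵥ (signlessLap Gᶜ *ᵥ z) = ∑ v, z v * (signlessLap Gᶜ *ᵥ z) v from rfl]
          ring
  -- counting eigenvalues > n - 2 : at most one
  have hTgt : (Finset.univ.filter fun v => (n:ℝ) - 2 < hQherm.eigenvalues v).card ≤ 1 := by
    rw [Finset.card_le_one]
    intro i hi j hj
    by_contra hij
    simp only [Finset.mem_filter, Finset.mem_univ, true_and] at hi hj
    set si := ∑ v, eigfun hQherm i v with hsi'
    set sj := ∑ v, eigfun hQherm j v with hsj'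
    obtain ⟨α, β, hab, hsum0⟩ : ∃ α β : ℝ, (α ≠ 0 ∨ β ≠ 0) ∧ α * si + β * sj = 0 := by
      by_cases hsi : si = 0
      · exact ⟨1, 0, Or.inl one_ne_zero, by rw [hsi]; ring⟩
      · exact ⟨sj, -si, Or.inr (neg_ne_zero.mpr hsi), by ring⟩
    set z := α • eigfun hQherm i + β • eigfun hQherm j with hz2
    have hzsum : ∑ v, z v = 0 := by
      simp only [hz2, Pi.add_apply, Pi.smul_apply, smul_eq_mul, Finset.sum_add_distrib,
        ← Finset.mul_sum]
      exact hsum0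
    have hzz : z ⬝ᵥ z = α^2 + β^2 := by
      simp only [hz2, dotProduct_add, add_dotProduct, dotProduct_smul, smul_dotProduct,
        smul_eq_mul, eigfun_dot, if_pos rfl, if_true, if_neg hij, if_neg (fun hh : j = i => hij hh.symm)]
      ring
    have hQz : signlessLap G *ᵥ z
        = α • (hQherm.eigenvalues i • eigfun hQherm i)
          + β • (hQherm.eigenvalues j • eigfun hQherm j) := by
      rw [hz2, mulVec_add, mulVec_smul, mulVec_smul, mulVec_eigfun, mulVec_eigfun]
    have hform : z ⬝ᵥ (signlessLap G *ᵥ z)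
        = α^2 * hQherm.eigenvalues i + β^2 * hQherm.eigenvalues j := by
      rw [hQz]
      simp only [hz2, dotProduct_add, add_dotProduct, dotProduct_smul, smul_dotProduct,
        smul_eq_mul, eigfun_dot, if_pos rfl, if_true, if_neg hij, if_neg (fun hh : j = i => hij hh.symm)]
      ring
    have hub : z ⬝ᵥ (signlessLap G *ᵥ z) ≤ ((n:ℝ) - 2) * (z ⬝ᵥ z) := by
      rw [hdotQ z, hzsum]
      have hnn := signlessLap_form_nonneg Gᶜ z
      nlinarith
    have hlb : ((n:ℝ)-2) * (z ⬝ᵥ z) < z ⬝ᵥ (signlessLap G *ᵥ z) := by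
      rw [hform, hzz]
      rcases hab with hα | hβ
      · have hα2 : 0 < α ^ 2 := lt_of_le_of_ne (sq_nonneg α) (Ne.symm (pow_ne_zero 2 hα))
        have h1 : ((n:ℝ)-2) * α^2 < hQherm.eigenvalues i * α^2 :=
          mul_lt_mul_of_pos_right hi hα2
        have h2 : ((n:ℝ)-2) * β^2 ≤ hQherm.eigenvalues j * β^2 :=
          mul_le_mul_of_nonneg_right (le_of_lt hj) (sq_nonneg β)
        nlinarith
      · have hβ2 : 0 < β ^ 2 := lt_of_le_of_ne (sq_nonneg β) (Ne.symm (pow_ne_zero 2 hβ))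
        have h1 : ((n:ℝ)-2) * β^2 < hQherm.eigenvalues j * β^2 :=
          mul_lt_mul_of_pos_right hj hβ2
        have h2 : ((n:ℝ)-2) * α^2 ≤ hQherm.eigenvalues i * α^2 :=
          mul_le_mul_of_nonneg_right (le_of_lt hi) (sq_nonneg α)
        nlinarith
    linarith
  -- counting eigenvalues ≥ n - 2 : at least k + 1
  set Tge := Finset.univ.filter (fun v => (n:ℝ) - 2 ≤ hQherm.eigenvalues v) with hTgedef
  have hTge : k + 1 ≤ Tge.card := by
    by_contra hlt
    push_neg at hlt
    set vv : Fin (k+1) → (Fin n → ℝ) := Fin.snoc x y with hvv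
    have hvvc : ∀ j : Fin k, vv j.castSucc = x j := fun j => by
      simp only [hvv, Fin.snoc_castSucc]
    have hvvl : vv (Fin.last k) = y := by simp only [hvv, Fin.snoc_last]
    obtain ⟨a, ⟨j0, hj0⟩, ha⟩ := exists_null_combo (ι := {v // v ∈ Tge})
      (by rw [Fintype.card_coe]; omega)
      (fun j => fun t => eigfun hQherm t.1 ⬝ᵥ vv j)
    set z := ∑ j, a j • vv j with hzdef
    have hzdot : ∀ t : Fin n, t ∈ Tge → eigfun hQherm t ⬝ᵥ z = 0 := by
      intro t ht
      have hcf := congrFun ha ⟨t, ht⟩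
      simp only [Finset.sum_apply, Pi.smul_apply, smul_eq_mul, Pi.zero_apply] at hcf
      rw [hzdef, dot_sum',
        Finset.sum_congr rfl (fun j _ => by rw [dotProduct_smul, smul_eq_mul])]
      exact hcf
    have hzsplit : z = (∑ j : Fin k, a j.castSucc • x j) + a (Fin.last k) • y := by
      rw [hzdef, Fin.sum_univ_castSucc]
      congr 1
      · exact Finset.sum_congr rfl fun j _ => by rw [hvvc j]
      · rw [hvvl]
    have hxz : ∀ i, x i ⬝ᵥ z = a i.castSucc * (x i ⬝ᵥ x i) := by
      intro i
      rw [hzsplit, dotProduct_add, dot_sum', dotProduct_smul, smul_eq_mul, hxiy i, mul_zero,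
        add_zero]
      rw [Finset.sum_eq_single i (fun j _ hj => by
          rw [dotProduct_smul, smul_eq_mul, hxx0 i j (Ne.symm hj), mul_zero])
        (fun hi => absurd (Finset.mem_univ i) hi)]
      rw [dotProduct_smul, smul_eq_mul]
    have hyz : y ⬝ᵥ z = a (Fin.last k) * (y ⬝ᵥ y) := by
      rw [hzsplit, dotProduct_add, dot_sum', dotProduct_smul, smul_eq_mul]
      have h1 : ∑ j : Fin k, y ⬝ᵥ (a j.castSucc • x j) = 0 := by
        refine Finset.sum_eq_zero fun j _ => ?_
        rw [dotProduct_smul, smul_eq_mul, dotProduct_comm, hxiy j, mul_zero]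
      rw [h1, zero_add]
    have hzne : z ≠ 0 := by
      intro h0
      have hax : ∀ i : Fin k, a i.castSucc = 0 := by
        intro i
        have hd := hxz i
        rw [h0, dotProduct_zero] at hd
        exact ((mul_eq_zero.mp hd.symm).resolve_right (ne_of_gt (hxxpos i)))
      have hay : a (Fin.last k) = 0 := by
        have hd := hyz
        rw [h0, dotProduct_zero] at hd
        exact ((mul_eq_zero.mp hd.symm).resolve_right (ne_of_gt hyypos))
      induction j0 using Fin.lastCases with
      | last => exact hj0 hay
      | cast i => exact hj0 (hax i)
    have hzsum : ∑ v, z v = a (Fin.last k) * ∑ v, y v := by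
      rw [hzsplit]
      simp only [Pi.add_apply, Finset.sum_apply, Pi.smul_apply, smul_eq_mul]
      rw [Finset.sum_add_distrib]
      have h1 : ∑ v, ∑ j : Fin k, a j.castSucc * x j v = 0 := by
        rw [Finset.sum_comm]
        refine Finset.sum_eq_zero fun j _ => ?_
        rw [← Finset.mul_sum, hxsum j, mul_zero]
      rw [h1, ← Finset.mul_sum, zero_add]
    have hQHz : signlessLap Gᶜ *ᵥ z = a (Fin.last k) • (signlessLap Gᶜ *ᵥ y) := by
      rw [hzsplit, mulVec_add, mulVec_sumv', mulVec_smul]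
      have hterm : ∀ j : Fin k, signlessLap Gᶜ *ᵥ (a j.castSucc • x j) = 0 := fun j => by
        rw [mulVec_smul, hmulH j, smul_zero]
      rw [Finset.sum_congr rfl fun j _ => hterm j, Finset.sum_const_zero, zero_add]
    have hzQHz : z ⬝ᵥ (signlessLap Gᶜ *ᵥ z)
        = a (Fin.last k)^2 * (y ⬝ᵥ (signlessLap Gᶜ *ᵥ y)) := by
      rw [hQHz, dotProduct_smul, smul_eq_mul]
      have hsymQH : z ⬝ᵥ (signlessLap Gᶜ *ᵥ y) = a (Fin.last k) * (y ⬝ᵥ (signlessLap Gᶜ *ᵥ y)) := by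
        rw [hzsplit, add_dotProduct]
        have h1 : (∑ j : Fin k, a j.castSucc • x j) ⬝ᵥ (signlessLap Gᶜ *ᵥ y) = 0 := by
          rw [dotProduct_comm, dot_sum']
          refine Finset.sum_eq_zero fun j _ => ?_
          rw [dotProduct_smul, smul_eq_mul, dotProduct_comm, dot_mulVec_symm hQHherm, hmulH j,
            zero_dotProduct, mul_zero]
        rw [h1, zero_add, smul_dotProduct, smul_eq_mul]
      rw [hsymQH]
      ring
    have hKI : ((n:ℝ) - 2) * (z ⬝ᵥ z) ≤ z ⬝ᵥ (signlessLap G *ᵥ z) := by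
      rw [hdotQ z, hzsum, hzQHz]
      have hnn : 0 ≤ a (Fin.last k)^2 * ((∑ v, y v)^2 - y ⬝ᵥ (signlessLap Gᶜ *ᵥ y)) :=
        mul_nonneg (sq_nonneg _) (by linarith)
      nlinarith
    have hspec : z ⬝ᵥ (signlessLap G *ᵥ z) < ((n:ℝ)-2) * (z ⬝ᵥ z) := by
      rw [dot_mulVec_eq_sum hQherm z, dot_self_eq_sum hQherm z]
      have hwit : ∃ v0 : Fin n, eigfun hQherm v0 ⬝ᵥ z ≠ 0 := by
        by_contra hall
        push_neg at hall
        apply hzne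
        have hexp := eig_expansion hQherm z
        rw [Finset.sum_congr rfl (fun v _ => by rw [hall v, zero_smul]),
          Finset.sum_const_zero] at hexp
        exact hexp.symm
      obtain ⟨v0, hv0⟩ := hwit
      have hkey : 0 < ∑ v, (((n:ℝ)-2) - hQherm.eigenvalues v) * (eigfun hQherm v ⬝ᵥ z)^2 := by
        refine Finset.sum_pos' (fun v _ => ?_) ⟨v0, Finset.mem_univ v0, ?_⟩
        · by_cases hv : v ∈ Tge
          · rw [hzdot v hv]
            simp
          · simp only [hTgedef, Finset.mem_filter, Finset.mem_univ, true_and] at hv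
            push_neg at hv
            exact mul_nonneg (by linarith) (sq_nonneg _)
        · have hv0n : v0 ∉ Tge := fun hmem'' => hv0 (hzdot v0 hmem'')
          simp only [hTgedef, Finset.mem_filter, Finset.mem_univ, true_and] at hv0n
          push_neg at hv0n
          have hsq : 0 < (eigfun hQherm v0 ⬝ᵥ z)^2 :=
            lt_of_le_of_ne (sq_nonneg _) (Ne.symm (pow_ne_zero 2 hv0))
          exact mul_pos (by linarith) hsq
      have hid : ((n:ℝ)-2) * (∑ v, (eigfun hQherm v ⬝ᵥ z)^2)
          - ∑ v, hQherm.eigenvalues v * (eigfun hQherm v ⬝ᵥ z)^2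
          = ∑ v, (((n:ℝ)-2) - hQherm.eigenvalues v) * (eigfun hQherm v ⬝ᵥ z)^2 := by
        rw [Finset.mul_sum, ← Finset.sum_sub_distrib]
        exact Finset.sum_congr rfl fun v _ => by ring
      linarith
    linarith
  -- final assembly
  have hkN : k < Fintype.card (Fin n) := by simpa using hkn
  have h2' : (Finset.univ.filter fun v => (n:ℝ) - 2 < hQherm.eigenvalues v).card ≤ k :=
    le_trans hTgt hk1
  rw [qEig, kthEig, dif_pos hQherm,
    dif_pos (show k + 1 - 1 < Fintype.card (Fin n) by simpa using hkn)]
  have hres := sorted_eq (hQherm.eigenvalues ∘ (Fintype.equivFin (Fin n)).symm)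
    ((n:ℝ) - 2) k hkN ?_ ?_
  · exact hres
  · have hc := card_filter_comp_equiv (Fintype.equivFin (Fin n)).symm
      (fun v => (n:ℝ) - 2 ≤ hQherm.eigenvalues v)
    simp only [Function.comp_apply]
    rw [hc]
    exact hTge
  · have hc := card_filter_comp_equiv (Fintype.equivFin (Fin n)).symm
      (fun v => (n:ℝ) - 2 < hQherm.eigenvalues v)
    simp only [Function.comp_apply]
    rw [hc]
    exact h2'
end

section
/- Let 1 ≤ k < n and let G be a simple graph of order n whose complement has at least k + 1 bipartite components. Then n − 2 is an eigenvalue of Q(G) with multiplicity at least k, and in particular q_{k+1}(G) = n − 2. -/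
open Matrix SimpleGraph
open scoped Classical

section auxiliary
open Finset

lemma sorted_select {n : ℕ} (f : Fin n → ℝ) (c : ℝ) (k : ℕ) (hk : k < n)
    (hge : k + 1 ≤ (univ.filter (fun i => c ≤ f i)).card)
    (hgt : (univ.filter (fun i => c < f i)).card ≤ k) :
    (f ∘ Tuple.sort f) (Fin.rev ⟨k, hk⟩) = c := by
  set g : Fin n → ℝ := f ∘ Tuple.sort f with hg
  have hmono : Monotone g := Tuple.monotone_sort f
  have hcard : ∀ p : ℝ → Prop, (univ.filter (fun i => p (g i))).card
      = (univ.filter (fun i => p (f i))).card := by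
    intro p
    apply Finset.card_bij (fun j _ => Tuple.sort f j)
    · intro a ha; simp only [mem_filter, mem_univ, true_and] at ha ⊢; exact ha
    · intro a _ b _ hab; exact (Tuple.sort f).injective hab
    · intro b hb
      refine ⟨(Tuple.sort f).symm b, ?_, by simp⟩
      simp only [mem_filter, mem_univ, true_and] at hb ⊢
      simpa [hg] using hb
  set p : Fin n := Fin.rev ⟨k, hk⟩ with hp
  have hpval : (p : ℕ) = n - (k + 1) := by simp [hp, Fin.rev]
  have h1 : c ≤ g p := by
    by_contra hlt
    push_neg at hlt
    have hsub : univ.filter (fun i => c ≤ g i) ⊆ Finset.Ioi p := by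
      intro j hj
      simp only [mem_filter, mem_univ, true_and] at hj
      rw [Finset.mem_Ioi]
      by_contra hle
      push_neg at hle
      exact absurd (le_trans hj (hmono hle)) (not_le.mpr hlt)
    have := Finset.card_le_card hsub
    rw [Fin.card_Ioi, hpval] at this
    rw [hcard] at this
    omega
  have h2 : g p ≤ c := by
    by_contra hlt
    push_neg at hlt
    have hsub : Finset.Ici p ⊆ univ.filter (fun i => c < g i) := by
      intro j hj
      rw [Finset.mem_Ici] at hj
      simp only [mem_filter, mem_univ, true_and]
      exact lt_of_lt_of_le hlt (hmono hj)
    have := Finset.card_le_card hsub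
    rw [Fin.card_Ici, hpval, hcard] at this
    omega
  linarith

lemma lap_id {n : ℕ} (G : SimpleGraph (Fin n)) [DecidableRel G.Adj] :
    signlessLap G = ((n:ℝ)-2) • (1 : Matrix (Fin n) (Fin n) ℝ)
      + Matrix.of (fun _ _ => (1:ℝ)) - signlessLap Gᶜ := by
  ext u v
  have hn : 1 ≤ n := u.pos
  simp only [signlessLap, degMatrix, Matrix.add_apply, Matrix.sub_apply, Matrix.smul_apply,
    Matrix.one_apply, diagonal_apply, adjMatrix_apply, Matrix.of_apply, smul_eq_mul]
  by_cases huv : u = v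
  · subst huv
    have h1 : Gᶜ.degree u = n - 1 - G.degree u := by
      simpa using G.degree_compl (v := u)
    have h2 : G.degree u < n := by simpa using G.degree_lt_card_verts u
    have h3 : G.degree u + Gᶜ.degree u = n - 1 := by omega
    have h4 : ((G.degree u : ℝ)) + (Gᶜ.degree u : ℝ) = (n : ℝ) - 1 := by
      have := congrArg (fun m : ℕ => (m : ℝ)) h3
      push_cast [Nat.cast_sub hn] at this
      linarith [this]
    simp only [if_pos rfl, compl_adj]
    simp only [G.irrefl, and_false, if_false, ne_eq, not_true_eq_false, false_and, if_true]
    linarith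
  · simp only [if_neg huv, compl_adj, ne_eq, huv, not_false_iff, true_and]
    by_cases hadj : G.Adj u v <;> simp [hadj, mul_one]

lemma degree_cast_eq {V : Type*} [Fintype V] [DecidableEq V] (H : SimpleGraph V)
    [DecidableRel H.Adj] (u : V) :
    (H.degree u : ℝ) = ∑ v, if H.Adj u v then (1:ℝ) else 0 := by
  rw [Finset.sum_boole]
  congr 1
  rw [SimpleGraph.degree]
  congr 1
  ext v
  simp [SimpleGraph.mem_neighborFinset]

lemma lap_mulVec {V : Type*} [Fintype V] [DecidableEq V] (H : SimpleGraph V)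
    [DecidableRel H.Adj] (x : V → ℝ) (u : V) :
    (signlessLap H *ᵥ x) u
      = (H.degree u : ℝ) * x u + ∑ v, (if H.Adj u v then (1:ℝ) else 0) * x v := by
  have : (signlessLap H *ᵥ x) u = (H.degMatrix ℝ *ᵥ x) u + (H.adjMatrix ℝ *ᵥ x) u := by
    rw [signlessLap, add_mulVec]; rfl
  rw [this, degMatrix_mulVec_apply]
  congr 1

lemma quad_expand {V : Type*} [Fintype V] [DecidableEq V] (H : SimpleGraph V)
    [DecidableRel H.Adj] (x : V → ℝ) :
    x ⬝ᵥ (signlessLap H *ᵥ x)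
      = ∑ u, ∑ v, (if H.Adj u v then (1:ℝ) else 0) * (x u ^2 + x u * x v) := by
  simp only [dotProduct, lap_mulVec]
  refine Finset.sum_congr rfl fun u _ => ?_
  rw [degree_cast_eq, Finset.sum_mul, ← Finset.sum_add_distrib, Finset.mul_sum]
  refine Finset.sum_congr rfl fun v _ => ?_
  by_cases hadj : H.Adj u v <;> simp [hadj] <;> ring

lemma signlessLap_psd {V : Type*} [Fintype V] [DecidableEq V] (H : SimpleGraph V)
    [DecidableRel H.Adj] (x : V → ℝ) : 0 ≤ x ⬝ᵥ (signlessLap H *ᵥ x) := by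
  have h2 : ∑ u, ∑ v, (if H.Adj u v then (1:ℝ) else 0) * (x v^2 + x v * x u)
      = ∑ u, ∑ v, (if H.Adj u v then (1:ℝ) else 0) * (x u^2 + x u * x v) := by
    rw [Finset.sum_comm]
    refine Finset.sum_congr rfl fun u _ => Finset.sum_congr rfl fun v _ => ?_
    congr 1
    exact if_congr ⟨fun h => h.symm, fun h => h.symm⟩ rfl rfl
  have key : x ⬝ᵥ (signlessLap H *ᵥ x) * 2
      = ∑ u, ∑ v, (if H.Adj u v then (1:ℝ) else 0) * (x u + x v)^2 := by
    rw [quad_expand, mul_two]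
    nth_rewrite 2 [← h2]
    rw [← Finset.sum_add_distrib]
    refine Finset.sum_congr rfl fun u _ => ?_
    rw [← Finset.sum_add_distrib]
    refine Finset.sum_congr rfl fun v _ => ?_
    ring
  have hnn : (0:ℝ) ≤ ∑ u, ∑ v, (if H.Adj u v then (1:ℝ) else 0) * (x u + x v)^2 :=
    Finset.sum_nonneg fun u _ => Finset.sum_nonneg fun v _ => by positivity
  linarith [key]

lemma bip_vec {V : Type*} [Fintype V] [DecidableEq V] (H : SimpleGraph V)
    [DecidableRel H.Adj] (c : H.ConnectedComponent) (hc : IsBipartiteComponent H c) :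
    ∃ x : V → ℝ, signlessLap H *ᵥ x = 0 ∧ (∀ v, v ∉ c.supp → x v = 0) ∧ (∃ v, x v ≠ 0) := by
  obtain ⟨U, W, hUW, hdisj, hbip⟩ := hc
  set x : V → ℝ := fun v => if v ∈ U then 1 else if v ∈ W then -1 else 0 with hx
  have hUsupp : U ⊆ c.supp := hUW ▸ Set.subset_union_left
  have hWsupp : W ⊆ c.supp := hUW ▸ Set.subset_union_right
  have hout : ∀ v, v ∉ c.supp → x v = 0 := by
    intro v hv
    have h1 : v ∉ U := fun h => hv (hUsupp h)
    have h2 : v ∉ W := fun h => hv (hWsupp h)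
    simp [hx, h1, h2]
  have hopp : ∀ u v, H.Adj u v → x v = - x u := by
    intro u v hadj
    by_cases hu : u ∈ c.supp
    · rcases hbip hu hadj with ⟨h1, h2⟩ | ⟨h1, h2⟩
      · have : v ∉ U := fun hvU => (Set.disjoint_left.mp hdisj hvU) h2
        simp [hx, h1, h2, this]
      · have : u ∉ U := fun huU => (Set.disjoint_left.mp hdisj huU) h1
        simp [hx, h1, h2, this]
    · have hv : v ∉ c.supp := by
        intro hv
        apply hu
        rw [SimpleGraph.ConnectedComponent.mem_supp_iff] at hv ⊢
        rw [← hv]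
        exact ConnectedComponent.sound hadj.reachable
      rw [hout u hu, hout v hv, neg_zero]
  refine ⟨x, ?_, hout, ?_⟩
  · funext u
    rw [lap_mulVec, Pi.zero_apply]
    have : ∑ v, (if H.Adj u v then (1:ℝ) else 0) * x v
        = ∑ v, (if H.Adj u v then (1:ℝ) else 0) * (- x u) := by
      refine Finset.sum_congr rfl fun v _ => ?_
      by_cases hadj : H.Adj u v
      · simp [hadj, hopp u v hadj]
      · simp [hadj]
    rw [this, ← Finset.sum_mul, ← degree_cast_eq]
    ring
  · obtain ⟨v, hv⟩ := c.exists_rep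
    have hvsupp : v ∈ c.supp := by rw [SimpleGraph.ConnectedComponent.mem_supp_iff]; exact hv
    rw [← hUW] at hvsupp
    rcases hvsupp with hvU | hvW
    · exact ⟨v, by simp [hx, hvU]⟩
    · have : v ∉ U := fun h => (Set.disjoint_left.mp hdisj h) hvW
      exact ⟨v, by simp [hx, this, hvW]⟩

section spec
variable {n : ℕ} {Q : Matrix (Fin n) (Fin n) ℝ} (hQ : Q.IsHermitian)

lemma spec_move (w z : Fin n → ℝ) :
    (star (hQ.eigenvectorUnitary : Matrix (Fin n) (Fin n) ℝ) *ᵥ w) ⬝ᵥ z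
      = w ⬝ᵥ ((hQ.eigenvectorUnitary : Matrix (Fin n) (Fin n) ℝ) *ᵥ z) := by
  set U := (hQ.eigenvectorUnitary : Matrix (Fin n) (Fin n) ℝ)
  rw [dotProduct_comm, dotProduct_mulVec, star_eq_conjTranspose,
    conjTranspose_eq_transpose_of_trivial, vecMul_transpose, dotProduct_comm]

lemma spec_recover (x : Fin n → ℝ) :
    (hQ.eigenvectorUnitary : Matrix (Fin n) (Fin n) ℝ) *ᵥ
      (star (hQ.eigenvectorUnitary : Matrix (Fin n) (Fin n) ℝ) *ᵥ x) = x := by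
  rw [mulVec_mulVec, (mem_unitaryGroup_iff).mp hQ.eigenvectorUnitary.2, one_mulVec]

lemma spec_unrecover (y : Fin n → ℝ) :
    star (hQ.eigenvectorUnitary : Matrix (Fin n) (Fin n) ℝ) *ᵥ
      ((hQ.eigenvectorUnitary : Matrix (Fin n) (Fin n) ℝ) *ᵥ y) = y := by
  rw [mulVec_mulVec, (mem_unitaryGroup_iff').mp hQ.eigenvectorUnitary.2, one_mulVec]

lemma spec_norm (x : Fin n → ℝ) :
    x ⬝ᵥ x = ∑ t, ((star (hQ.eigenvectorUnitary : Matrix (Fin n) (Fin n) ℝ) *ᵥ x) t)^2 := by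
  set U := (hQ.eigenvectorUnitary : Matrix (Fin n) (Fin n) ℝ) with hU
  have : x ⬝ᵥ x = (star U *ᵥ x) ⬝ᵥ (star U *ᵥ x) := by
    rw [spec_move hQ, spec_recover hQ]
  rw [this, dotProduct]
  exact Finset.sum_congr rfl fun t _ => (sq _).symm

lemma spec_quad (x : Fin n → ℝ) :
    x ⬝ᵥ (Q *ᵥ x) = ∑ t, hQ.eigenvalues t *
      ((star (hQ.eigenvectorUnitary : Matrix (Fin n) (Fin n) ℝ) *ᵥ x) t)^2 := by
  set U := (hQ.eigenvectorUnitary : Matrix (Fin n) (Fin n) ℝ) with hU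
  set y := star U *ᵥ x with hy
  have hdiag : (diagonal (RCLike.ofReal ∘ hQ.eigenvalues) : Matrix (Fin n) (Fin n) ℝ)
      = diagonal hQ.eigenvalues := by
    congr 1
  have h1 : Q *ᵥ x = U *ᵥ (diagonal hQ.eigenvalues *ᵥ y) := by
    conv_lhs => rw [hQ.spectral_theorem]
    rw [hdiag, Unitary.conjStarAlgAut_apply, ← mulVec_mulVec, ← mulVec_mulVec]
  rw [h1, ← spec_move hQ, ← hy, dotProduct]
  exact Finset.sum_congr rfl fun t _ => by rw [mulVec_diagonal]; ring

lemma cnt_gt_aux {c : ℝ}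
    (ray_le : ∀ x : Fin n → ℝ, (∑ t, x t) = 0 → x ⬝ᵥ (Q *ᵥ x) ≤ c * (x ⬝ᵥ x)) :
    (Finset.univ.filter (fun i => c < hQ.eigenvalues i)).card ≤ 1 := by
  set μ : Fin n → ℝ := hQ.eigenvalues with hμ
  by_contra hcnt
  push_neg at hcnt
  rw [Finset.one_lt_card_iff] at hcnt
  obtain ⟨i, j, hi, hj, hij⟩ := hcnt
  rw [Finset.mem_filter] at hi hj
  have hμi : c < μ i := hi.2
  have hμj : c < μ j := hj.2
  set U : Matrix (Fin n) (Fin n) ℝ := (hQ.eigenvectorUnitary : Matrix (Fin n) (Fin n) ℝ)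
    with hU
  set u : Fin n → ℝ := U *ᵥ Pi.single i 1 with hu
  set w : Fin n → ℝ := U *ᵥ Pi.single j 1 with hw
  set p : ℝ := ∑ t, u t with hp
  set q : ℝ := ∑ t, w t with hq
  obtain ⟨α, β, hne, hsum⟩ : ∃ α β : ℝ, ¬(α = 0 ∧ β = 0) ∧ α * p + β * q = 0 := by
    by_cases hpq : p = 0 ∧ q = 0
    · exact ⟨1, 0, by norm_num, by rw [hpq.1, hpq.2]; ring⟩
    · exact ⟨q, -p, fun hh => hpq ⟨by rw [← neg_neg p, hh.2, neg_zero], hh.1⟩, by ring⟩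
  set x : Fin n → ℝ := α • u + β • w with hx
  have hxsum : ∑ t, x t = 0 := by
    rw [hx]
    simp only [Pi.add_apply, Pi.smul_apply, smul_eq_mul]
    rw [Finset.sum_add_distrib, ← Finset.mul_sum, ← Finset.mul_sum, ← hp, ← hq]
    exact hsum
  set y : Fin n → ℝ := star U *ᵥ x with hy
  have hyval : y = α • (Pi.single i 1 : Fin n → ℝ) + β • (Pi.single j 1 : Fin n → ℝ) := by
    rw [hy, hx, mulVec_add, mulVec_smul, mulVec_smul, hu, hw, hU,
      spec_unrecover hQ, spec_unrecover hQ]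
  have happ : ∀ t, y t = α * (Pi.single i 1 : Fin n → ℝ) t
      + β * (Pi.single j 1 : Fin n → ℝ) t := by
    intro t; rw [hyval]; simp
  have hvanish : ∀ t, t ∉ ({i, j} : Finset (Fin n)) → y t = 0 := by
    intro t ht
    simp only [Finset.mem_insert, Finset.mem_singleton, not_or] at ht
    rw [happ t, Pi.single_eq_of_ne ht.1, Pi.single_eq_of_ne ht.2]
    ring
  have hyi : y i = α := by
    rw [happ i, Pi.single_eq_same, Pi.single_eq_of_ne hij]
    ring
  have hyj : y j = β := by
    rw [happ j, Pi.single_eq_of_ne (Ne.symm hij), Pi.single_eq_same]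
    ring
  have hxx : x ⬝ᵥ x = α^2 + β^2 := by
    rw [spec_norm hQ x, ← hU, ← hy]
    rw [← Finset.sum_subset (Finset.subset_univ ({i, j} : Finset (Fin n)))
      (fun t _ ht => by rw [hvanish t ht]; ring)]
    rw [Finset.sum_pair hij, hyi, hyj]
  have hxQx : x ⬝ᵥ (Q *ᵥ x) = μ i * α^2 + μ j * β^2 := by
    rw [spec_quad hQ x, ← hU, ← hy, ← hμ]
    rw [← Finset.sum_subset (Finset.subset_univ ({i, j} : Finset (Fin n)))
      (fun t _ ht => by rw [hvanish t ht]; ring)]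
    rw [Finset.sum_pair hij, hyi, hyj]
  have hle := ray_le x hxsum
  rw [hxx, hxQx] at hle
  rcases not_and_or.mp hne with hne' | hne'
  · have e1 : 0 < (μ i - c) * α^2 := mul_pos (by linarith) (by positivity)
    have e2 : 0 ≤ (μ j - c) * β^2 := mul_nonneg (by linarith) (sq_nonneg β)
    nlinarith [hle, e1, e2]
  · have e1 : 0 ≤ (μ i - c) * α^2 := mul_nonneg (by linarith) (sq_nonneg α)
    have e2 : 0 < (μ j - c) * β^2 := mul_pos (by linarith) (by positivity)
    nlinarith [hle, e1, e2]

lemma cnt_ge_aux {c : ℝ} {k : ℕ} (K : Submodule ℝ (Fin n → ℝ))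
    (hKrank : Module.finrank ℝ K = k + 1)
    (ray_ge : ∀ x ∈ K, c * (x ⬝ᵥ x) ≤ x ⬝ᵥ (Q *ᵥ x)) :
    k + 1 ≤ (Finset.univ.filter (fun i => c ≤ hQ.eigenvalues i)).card := by
  set μ : Fin n → ℝ := hQ.eigenvalues with hμ
  by_contra hcnt
  push_neg at hcnt
  have hcard_le : (Finset.univ.filter (fun i => c ≤ μ i)).card ≤ k := by omega
  set U : Matrix (Fin n) (Fin n) ℝ := (hQ.eigenvectorUnitary : Matrix (Fin n) (Fin n) ℝ)
    with hU
  set η : (Fin n → ℝ) →ₗ[ℝ] ({i : Fin n // c ≤ μ i} → ℝ) :=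
    LinearMap.pi (fun i => LinearMap.proj i.1 ∘ₗ Matrix.mulVecLin (star U)) with hη
  set ψ := η.domRestrict K with hψ
  have h1 := LinearMap.finrank_range_add_finrank_ker ψ
  have h2 : Module.finrank ℝ (LinearMap.range ψ) ≤ k := by
    refine le_trans (Submodule.finrank_le _) ?_
    rw [Module.finrank_fintype_fun_eq_card, Fintype.card_subtype]
    exact hcard_le
  rw [hKrank] at h1
  have hkerne : LinearMap.ker ψ ≠ ⊥ := by
    intro hbot
    rw [hbot, finrank_bot] at h1
    omega
  obtain ⟨ξ, hξmem, hξne⟩ := Submodule.exists_mem_ne_zero_of_ne_bot hkerne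
  set x : Fin n → ℝ := (ξ : Fin n → ℝ) with hxdef
  have hxK : x ∈ K := ξ.2
  have hxne : x ≠ 0 := fun h0 => hξne (Subtype.ext h0)
  set y : Fin n → ℝ := star U *ᵥ x with hy
  have hy0 : ∀ t, c ≤ μ t → y t = 0 := by
    intro t ht
    rw [LinearMap.mem_ker] at hξmem
    have := congrFun hξmem ⟨t, ht⟩
    simpa [hψ, hη, LinearMap.domRestrict_apply, LinearMap.pi_apply,
      Matrix.mulVecLin_apply, hy, hxdef] using this
  have hyne : y ≠ 0 := by
    intro h0
    apply hxne
    have := spec_recover hQ x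
    rw [← hU, ← hy, h0, mulVec_zero] at this
    exact this.symm
  obtain ⟨t0, ht0'⟩ := Function.ne_iff.mp hyne
  have ht0 : y t0 ≠ 0 := ht0'
  have hμt0 : μ t0 < c := by
    by_contra hge
    push_neg at hge
    exact ht0 (hy0 t0 hge)
  have hstrict : ∑ t, μ t * (y t)^2 < ∑ t, c * (y t)^2 := by
    apply Finset.sum_lt_sum
    · intro t _
      by_cases hct : c ≤ μ t
      · rw [hy0 t hct]
        simp
      · push_neg at hct
        exact mul_le_mul_of_nonneg_right (le_of_lt hct) (sq_nonneg _)
    · refine ⟨t0, Finset.mem_univ _, ?_⟩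
      have hpos : (0:ℝ) < (y t0)^2 := by positivity
      exact mul_lt_mul_of_pos_right hμt0 hpos
  have h4 : x ⬝ᵥ (Q *ᵥ x) = ∑ t, μ t * (y t)^2 := by
    rw [spec_quad hQ x, ← hU, ← hy, ← hμ]
  have h5 : x ⬝ᵥ x = ∑ t, (y t)^2 := by
    rw [spec_norm hQ x, ← hU, ← hy]
  have h6 := ray_ge x hxK
  rw [h4, h5] at h6
  rw [← Finset.mul_sum] at hstrict
  linarith
end spec

lemma inf_ker_rank {n k : ℕ} (K : Submodule ℝ (Fin n → ℝ)) (φ : (Fin n → ℝ) →ₗ[ℝ] ℝ)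
    (hKrank : Module.finrank ℝ K = k + 1) :
    k ≤ Module.finrank ℝ ↥(K ⊓ LinearMap.ker φ) := by
  have hdim1 := Submodule.finrank_sup_add_finrank_inf_eq K (LinearMap.ker φ)
  have hdim2 : Module.finrank ℝ ↥(K ⊔ LinearMap.ker φ) ≤ n := by
    refine le_trans (Submodule.finrank_le _) ?_
    rw [Module.finrank_fintype_fun_eq_card]
    simp
  have hdim3 : n ≤ Module.finrank ℝ (LinearMap.ker φ) + 1 := by
    have h1 := LinearMap.finrank_range_add_finrank_ker φ
    have h2 : Module.finrank ℝ (LinearMap.range φ) ≤ 1 := by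
      simpa using Submodule.finrank_le (LinearMap.range φ)
    rw [Module.finrank_fintype_fun_eq_card] at h1
    simp only [Fintype.card_fin] at h1
    omega
  omega

end auxiliary

/-- Let `1 ≤ k < n` and let `G` be a graph of order `n` whose complement has at least
`k + 1` bipartite components. Then `n - 2` is an eigenvalue of `Q(G)` with multiplicity
at least `k`; in particular `q_{k+1}(G) = n - 2`. -/
theorem multiplicity_of_bipartite_components (n k : ℕ) (hk1 : 1 ≤ k) (hkn : k < n)
    (G : SimpleGraph (Fin n)) [DecidableRel G.Adj]
    (h : k + 1 ≤ {c : Gᶜ.ConnectedComponent | IsBipartiteComponent Gᶜ c}.ncard) :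
    Module.End.HasEigenvalue (Matrix.toLin' (signlessLap G)) ((n : ℝ) - 2) ∧
    k ≤ Module.finrank ℝ
        (Module.End.eigenspace (Matrix.toLin' (signlessLap G)) ((n : ℝ) - 2)) ∧
    qEig G (k + 1) = (n : ℝ) - 2 := by
  classical
  have hQ : (signlessLap G).IsHermitian := by
    rw [Matrix.IsHermitian, conjTranspose_eq_transpose_of_trivial, signlessLap]
    exact (isSymm_degMatrix ℝ G).add (isSymm_adjMatrix G)
  set c : ℝ := (n : ℝ) - 2 with hc
  set Q : Matrix (Fin n) (Fin n) ℝ := signlessLap G with hQdef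
  set Q' : Matrix (Fin n) (Fin n) ℝ := signlessLap Gᶜ with hQ'def
  -- the basic identity
  have hmul : ∀ x : Fin n → ℝ, Q *ᵥ x
      = c • x + (∑ t, x t) • (fun _ => (1:ℝ)) - Q' *ᵥ x := by
    intro x
    rw [hQdef, lap_id G, sub_mulVec, add_mulVec, smul_mulVec, one_mulVec]
    congr 1
    congr 1
    funext u
    simp [mulVec, dotProduct, mul_comm]
  have quad_id : ∀ x : Fin n → ℝ,
      x ⬝ᵥ (Q *ᵥ x) = c * (x ⬝ᵥ x) + (∑ t, x t)^2 - x ⬝ᵥ (Q' *ᵥ x) := by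
    intro x
    rw [hmul x, dotProduct_sub, dotProduct_add, dotProduct_smul, dotProduct_smul,
      smul_eq_mul, smul_eq_mul]
    have h1 : x ⬝ᵥ (fun _ => (1:ℝ)) = ∑ t, x t := by simp [dotProduct]
    rw [h1]
    ring
  have ray_le : ∀ x : Fin n → ℝ, (∑ t, x t) = 0 → x ⬝ᵥ (Q *ᵥ x) ≤ c * (x ⬝ᵥ x) := by
    intro x hx
    have h0 : 0 ≤ x ⬝ᵥ (Q' *ᵥ x) := signlessLap_psd Gᶜ x
    have hq := quad_id x
    rw [hx] at hq
    nlinarith [hq, h0]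
  -- choose k+1 bipartite components
  have hSfin : {d : Gᶜ.ConnectedComponent | IsBipartiteComponent Gᶜ d}.Finite :=
    Set.toFinite _
  obtain ⟨T, hTsub, hTcard⟩ := Finset.exists_subset_card_eq (s := hSfin.toFinset) (n := k+1)
    (by rw [← Set.ncard_eq_toFinset_card _ hSfin]; exact h)
  have hTbip : ∀ d ∈ T, IsBipartiteComponent Gᶜ d := by
    intro d hd
    have := hTsub hd
    rwa [Set.Finite.mem_toFinset] at this
  -- the kernel vectors
  have hex : ∀ d : {d // d ∈ T}, ∃ x : Fin n → ℝ,
      signlessLap Gᶜ *ᵥ x = 0 ∧ (∀ v, v ∉ d.1.supp → x v = 0) ∧ (∃ v, x v ≠ 0) :=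
    fun d => bip_vec Gᶜ d.1 (hTbip d.1 d.2)
  choose F hF0 hFout hFne using hex
  have hlin : LinearIndependent ℝ F := by
    rw [Fintype.linearIndependent_iff]
    intro g hg i
    obtain ⟨v, hv⟩ := hFne i
    have hvsupp : v ∈ i.1.supp := by
      by_contra hvs
      exact hv (hFout i v hvs)
    have hsum := congrFun hg v
    simp only [Finset.sum_apply, Pi.smul_apply, smul_eq_mul, Pi.zero_apply] at hsum
    rw [Finset.sum_eq_single i ?side (by simp)] at hsum
    · exact (mul_eq_zero.mp hsum).resolve_right hv
    case side =>
      intro j _ hj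
      have hdiff : i.1 ≠ j.1 := fun hh => hj (Subtype.ext hh.symm)
      have hnot : v ∉ j.1.supp := by
        intro hvj
        rw [SimpleGraph.ConnectedComponent.mem_supp_iff] at hvsupp hvj
        exact hdiff (by rw [← hvsupp, ← hvj])
      rw [hFout j v hnot, mul_zero]
  set K : Submodule ℝ (Fin n → ℝ) := Submodule.span ℝ (Set.range F) with hK
  have hKrank : Module.finrank ℝ K = k + 1 := by
    rw [hK, finrank_span_eq_card hlin, Fintype.card_coe, hTcard]
  have hKker : ∀ x ∈ K, Q' *ᵥ x = 0 := by
    intro x hx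
    have hle : K ≤ LinearMap.ker (Matrix.mulVecLin Q') := by
      rw [hK, Submodule.span_le]
      rintro _ ⟨i, rfl⟩
      rw [SetLike.mem_coe, LinearMap.mem_ker, Matrix.mulVecLin_apply]
      exact hF0 i
    have := hle hx
    rwa [LinearMap.mem_ker, Matrix.mulVecLin_apply] at this
  have ray_ge : ∀ x ∈ K, c * (x ⬝ᵥ x) ≤ x ⬝ᵥ (Q *ᵥ x) := by
    intro x hx
    rw [quad_id x, hKker x hx]
    simp only [dotProduct_zero, sub_zero]
    nlinarith [sq_nonneg (∑ t, x t)]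
  -- the sum functional
  set φ : (Fin n → ℝ) →ₗ[ℝ] ℝ := ∑ t, LinearMap.proj t with hφ
  have hφ_apply : ∀ x : Fin n → ℝ, φ x = ∑ t, x t := by
    intro x
    rw [hφ, LinearMap.sum_apply]
    rfl
  -- K' lies in the eigenspace
  set K' : Submodule ℝ (Fin n → ℝ) := K ⊓ LinearMap.ker φ with hK'
  have hK'eig : K' ≤ Module.End.eigenspace (Matrix.toLin' Q) c := by
    rintro x ⟨hxK, hxφ⟩
    rw [Module.End.mem_eigenspace_iff, Matrix.toLin'_apply]
    have hxφ' : φ x = 0 := hxφ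
    rw [hφ_apply x] at hxφ'
    rw [hmul x, hxφ', zero_smul, add_zero, hKker x hxK, sub_zero]
  -- finrank of K'
  have hK'rank : k ≤ Module.finrank ℝ K' := inf_ker_rank K φ hKrank
  have hK'ne : K' ≠ ⊥ := by
    intro hbot
    rw [hbot, finrank_bot] at hK'rank
    omega
  refine ⟨?_, ?_, ?_⟩
  · rw [Module.End.hasEigenvalue_iff]
    intro hbot
    exact hK'ne (le_bot_iff.mp (hbot ▸ hK'eig))
  · exact le_trans hK'rank (Submodule.finrank_mono hK'eig)
  -- part 3
  · have cnt_gt := cnt_gt_aux hQ ray_le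
    have cnt_ge := cnt_ge_aux hQ K hKrank ray_ge
    have hdim : k + 1 - 1 < Fintype.card (Fin n) := by
      simpa using hkn
    have htri : qEig G (k+1) = ((hQ.eigenvalues ∘ (Fintype.equivFin (Fin n)).symm)
        ∘ Tuple.sort (hQ.eigenvalues ∘ (Fintype.equivFin (Fin n)).symm))
        (Fin.rev ⟨k + 1 - 1, hdim⟩) := by
      rw [qEig, kthEig, dif_pos hQ, dif_pos hdim]
    rw [htri]
    set f₀ : Fin (Fintype.card (Fin n)) → ℝ :=
      hQ.eigenvalues ∘ (Fintype.equivFin (Fin n)).symm with hf₀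
    have htrans : ∀ P : ℝ → Prop,
        (Finset.univ.filter (fun i => P (f₀ i))).card
        = (Finset.univ.filter (fun v : Fin n => P (hQ.eigenvalues v))).card := by
      intro P
      apply Finset.card_bij (fun i _ => (Fintype.equivFin (Fin n)).symm i)
      · intro a ha
        simp only [Finset.mem_filter, Finset.mem_univ, true_and] at ha ⊢
        exact ha
      · intro a _ b _ hab
        exact (Fintype.equivFin (Fin n)).symm.injective hab
      · intro b hb
        refine ⟨(Fintype.equivFin (Fin n)) b, ?_, by simp⟩
        simp only [Finset.mem_filter, Finset.mem_univ, true_and] at hb ⊢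
        simpa [hf₀] using hb
    exact sorted_select f₀ c (k + 1 - 1) hdim
      (by rw [htrans (fun r => c ≤ r)]; omega)
      (by rw [htrans (fun r => c < r)]; omega)
end

section
/- Let r ≥ 2 and t ≥ 2, and let G = K_{1,t,…,t} be the complete (r+1)-partite graph with one part of size 1 and r parts of size t. Then the largest signless Laplacian eigenvalue of G is q₁(G) = (3tr − 2t + 1 + √(t²(r−2)² + 2t(3r−2) + 1)) / 2. -/
open Matrix SimpleGraph
open scoped Classical

namespace K1ttAux


variable {r t : ℕ}

noncomputable def zf (p : Fin (r*t+1) → Fin (r+1)) : Fin (r*t+1) → ℝ :=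
  fun v => if p v = 0 then 1 else 0

noncomputable def Zm (p : Fin (r*t+1) → Fin (r+1)) : Matrix (Fin (r*t+1)) (Fin (r*t+1)) ℝ :=
  Matrix.of fun u v => zf p u * zf p v

noncomputable def Jm (_p : Fin (r*t+1) → Fin (r+1)) : Matrix (Fin (r*t+1)) (Fin (r*t+1)) ℝ :=
  Matrix.of fun _ _ => 1

noncomputable def Bm (p : Fin (r*t+1) → Fin (r+1)) : Matrix (Fin (r*t+1)) (Fin (r*t+1)) ℝ :=
  Matrix.of fun u v => if p u = p v then 1 else 0

noncomputable def Pm (p : Fin (r*t+1) → Fin (r+1)) : Matrix (Fin (r*t+1)) (Fin (r*t+1)) ℝ :=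
  Matrix.of fun _ v => zf p v

noncomputable def Pm' (p : Fin (r*t+1) → Fin (r+1)) : Matrix (Fin (r*t+1)) (Fin (r*t+1)) ℝ :=
  Matrix.of fun u _ => zf p u

section sums

variable (p : Fin (r*t+1) → Fin (r+1))

lemma zf_sq (v : Fin (r*t+1)) : zf p v * zf p v = zf p v := by
  unfold zf; split_ifs <;> ring

lemma sum_const' (c : ℝ) : (∑ _w : Fin (r*t+1), c) = (r*t+1 : ℝ) * c := by
  rw [Finset.sum_const, Finset.card_univ, Fintype.card_fin, nsmul_eq_mul]
  push_cast; ring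

variable (hc0 : (Finset.univ.filter fun v => p v = 0).card = 1)
  (hct : ∀ i : Fin (r+1), i ≠ 0 → (Finset.univ.filter fun v => p v = i).card = t)

include hc0 hct in
lemma sum_form {f : Fin (r*t+1) → ℝ} (i : Fin (r+1)) (c : ℝ)
    (h : ∀ w, f w = if p w = i then c else 0) :
    (∑ w, f w) = (if i = 0 then (1:ℝ) else t) * c := by
  have : (∑ w, f w) = ∑ w ∈ Finset.univ.filter fun v => p v = i, c := by
    rw [Finset.sum_filter]
    exact Finset.sum_congr rfl fun w _ => h w
  rw [this, Finset.sum_const, nsmul_eq_mul]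
  by_cases hi : i = 0
  · rw [hi, if_pos rfl, hc0]; norm_num
  · rw [if_neg hi, hct i hi]

include hc0 in
lemma uniq0 : ∀ {u v : Fin (r*t+1)}, p u = 0 → p v = 0 → u = v := by
  intro u v hu hv
  exact Finset.card_le_one.mp (le_of_eq hc0) u
    (Finset.mem_filter.mpr ⟨Finset.mem_univ _, hu⟩) v
    (Finset.mem_filter.mpr ⟨Finset.mem_univ _, hv⟩)

lemma zf_mul_of_ne {u v : Fin (r*t+1)} (h : p u ≠ p v) : zf p u * zf p v = 0 := by
  unfold zf
  split_ifs with h1 h2 h2 <;> try ring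
  exact absurd (h1.trans h2.symm) h

end sums
section products

variable (p : Fin (r*t+1) → Fin (r+1))
variable (hc0 : (Finset.univ.filter fun v => p v = 0).card = 1)
  (hct : ∀ i : Fin (r+1), i ≠ 0 → (Finset.univ.filter fun v => p v = i).card = t)

omit hc0 hct in
lemma Bm_apply' (u w : Fin (r*t+1)) : Bm p u w = if p w = p u then 1 else 0 := by
  simp only [Bm, Matrix.of_apply]
  exact if_congr eq_comm rfl rfl

include hc0 hct

lemma ZmulZ : Zm p * Zm p = Zm p := by
  ext u v
  rw [Matrix.mul_apply, sum_form p hc0 hct 0 (zf p u * zf p v) (fun w => by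
    simp only [Zm, Matrix.of_apply, zf]; split_ifs <;> simp_all)]
  simp [Zm, zf]

lemma ZmulJ : Zm p * Jm p = Pm' p := by
  ext u v
  rw [Matrix.mul_apply, sum_form p hc0 hct 0 (zf p u) (fun w => by
    simp only [Zm, Jm, Matrix.of_apply, zf]; split_ifs <;> simp_all)]
  simp [Pm', zf]

lemma ZmulB : Zm p * Bm p = Zm p := by
  ext u v
  rw [Matrix.mul_apply]
  by_cases hv : p v = 0
  · rw [sum_form p hc0 hct 0 (zf p u) (fun w => by
      simp only [Zm, Bm, Matrix.of_apply, zf, hv]; split_ifs <;> simp_all)]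
    simp [Zm, zf, hv]
  · rw [Finset.sum_eq_zero (fun w _ => by
      simp only [Zm, Bm, Matrix.of_apply, zf]; split_ifs <;> simp_all)]
    simp [Zm, zf, hv]

lemma ZmulP : Zm p * Pm p = Zm p := by
  ext u v
  rw [Matrix.mul_apply, sum_form p hc0 hct 0 (zf p u * zf p v) (fun w => by
    simp only [Zm, Pm, Matrix.of_apply, zf]; split_ifs <;> simp_all)]
  simp [Zm, zf]

lemma ZmulP' : Zm p * Pm' p = Pm' p := by
  ext u v
  rw [Matrix.mul_apply, sum_form p hc0 hct 0 (zf p u) (fun w => by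
    simp only [Zm, Pm', Matrix.of_apply, zf]; split_ifs <;> simp_all)]
  simp [Pm', zf]

lemma JmulZ : Jm p * Zm p = Pm p := by
  ext u v
  rw [Matrix.mul_apply, sum_form p hc0 hct 0 (zf p v) (fun w => by
    simp only [Zm, Jm, Matrix.of_apply, zf]; split_ifs <;> simp_all)]
  simp [Pm, zf]

lemma JmulJ : Jm p * Jm p = ((r*t+1 : ℝ)) • Jm p := by
  ext u v
  rw [Matrix.mul_apply]
  simp [Jm, sum_const' (1:ℝ)]

lemma JmulB : Jm p * Bm p = (t:ℝ) • Jm p - ((t:ℝ)-1) • Pm p := by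
  ext u v
  rw [Matrix.mul_apply, sum_form p hc0 hct (p v) 1 (fun w => by
    simp only [Jm, Bm, Matrix.of_apply]; split_ifs <;> simp_all [eq_comm])]
  by_cases hv : p v = 0 <;>
    simp [Jm, Pm, zf, hv] <;> ring

lemma JmulP : Jm p * Pm p = ((r*t+1 : ℝ)) • Pm p := by
  ext u v
  rw [Matrix.mul_apply]
  simp only [Jm, Pm, Matrix.of_apply, one_mul]
  rw [sum_const' (zf p v)]
  simp [Pm]

lemma JmulP' : Jm p * Pm' p = Jm p := by
  ext u v
  rw [Matrix.mul_apply, sum_form p hc0 hct 0 1 (fun w => by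
    simp only [Jm, Pm', Matrix.of_apply, zf]; split_ifs <;> simp_all)]
  simp [Jm]

lemma BmulZ : Bm p * Zm p = Zm p := by
  ext u v
  rw [Matrix.mul_apply]
  by_cases hu : p u = 0
  · rw [sum_form p hc0 hct 0 (zf p v) (fun w => by
      rw [Bm_apply']; simp only [Zm, Matrix.of_apply, hu, zf]
      split_ifs <;> first | norm_num | simp_all)]
    simp [Zm, zf, hu]
  · rw [Finset.sum_eq_zero (fun w _ => by
      by_cases hw : p w = 0
      · have hne : ¬ p u = p w := fun h => hu (h.trans hw)
        simp [Bm, hne]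
      · simp [Zm, zf, hw])]
    simp [Zm, zf, hu]

lemma BmulJ : Bm p * Jm p = (t:ℝ) • Jm p - ((t:ℝ)-1) • Pm' p := by
  ext u v
  rw [Matrix.mul_apply, sum_form p hc0 hct (p u) 1 (fun w => by
    simp only [Jm, Bm, Matrix.of_apply]; split_ifs <;> simp_all [eq_comm])]
  by_cases hu : p u = 0 <;>
    simp [Jm, Pm', zf, hu] <;> ring

lemma BmulB : Bm p * Bm p = (t:ℝ) • Bm p - ((t:ℝ)-1) • Zm p := by
  ext u v
  rw [Matrix.mul_apply]
  by_cases huv : p u = p v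
  · rw [sum_form p hc0 hct (p v) 1 (fun w => by
      rw [Bm_apply']
      simp only [Bm, Matrix.of_apply, huv]
      split_ifs <;> norm_num)]
    simp only [Bm, Zm, Matrix.of_apply, Matrix.smul_apply, Matrix.sub_apply,
      smul_eq_mul, if_pos huv]
    by_cases hv : p v = 0
    · simp only [zf, if_pos hv, if_pos (show p u = 0 from huv ▸ hv)]; norm_num
    · simp only [zf, if_neg hv, if_neg (show ¬ p u = 0 from fun h => hv (huv ▸ h))]; ring
  · rw [Finset.sum_eq_zero (fun w _ => by
      by_cases hw : p w = p u
      · have hne : ¬ p w = p v := fun h => huv ((hw.symm.trans h))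
        rw [Bm_apply']
        simp [Bm, hne]
      · rw [Bm_apply']; simp [hw])]
    simp only [Bm, Zm, Matrix.of_apply, Matrix.smul_apply, Matrix.sub_apply,
      smul_eq_mul, if_neg huv, zf_mul_of_ne p huv]
    ring

lemma BmulP : Bm p * Pm p = (t:ℝ) • Pm p - ((t:ℝ)-1) • Zm p := by
  ext u v
  rw [Matrix.mul_apply]
  rw [sum_form p hc0 hct (p u) (zf p v) (fun w => by
    rw [Bm_apply']; simp only [Pm, Matrix.of_apply]
    split_ifs <;> norm_num)]
  simp only [Pm, Zm, Matrix.of_apply, Matrix.smul_apply, Matrix.sub_apply, smul_eq_mul]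
  by_cases hu : p u = 0
  · simp only [if_pos hu, zf, if_pos hu]; ring
  · simp only [if_neg hu, zf, if_neg hu]; ring

lemma BmulP' : Bm p * Pm' p = Pm' p := by
  ext u v
  rw [Matrix.mul_apply]
  by_cases hu : p u = 0
  · rw [sum_form p hc0 hct 0 1 (fun w => by
      rw [Bm_apply']; simp only [Pm', Matrix.of_apply, hu, zf]
      split_ifs <;> norm_num)]
    simp [Pm', zf, hu]
  · rw [Finset.sum_eq_zero (fun w _ => by
      by_cases hw : p w = 0
      · have hne : ¬ p u = p w := fun h => hu (h.trans hw)
        simp [Bm, hne]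
      · simp [Pm', zf, hw])]
    simp [Pm', zf, hu]

lemma PmulZ : Pm p * Zm p = Pm p := by
  ext u v
  rw [Matrix.mul_apply, sum_form p hc0 hct 0 (zf p v) (fun w => by
    simp only [Pm, Zm, Matrix.of_apply, zf]; split_ifs <;> simp_all)]
  simp [Pm, zf]

lemma PmulJ : Pm p * Jm p = Jm p := by
  ext u v
  rw [Matrix.mul_apply, sum_form p hc0 hct 0 1 (fun w => by
    simp only [Pm, Jm, Matrix.of_apply, zf]; split_ifs <;> simp_all)]
  simp [Jm]

lemma PmulB : Pm p * Bm p = Pm p := by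
  ext u v
  rw [Matrix.mul_apply]
  by_cases hv : p v = 0
  · rw [sum_form p hc0 hct 0 1 (fun w => by
      simp only [Pm, Bm, Matrix.of_apply, zf, hv]; split_ifs <;> simp_all)]
    simp [Pm, zf, hv]
  · rw [Finset.sum_eq_zero (fun w _ => by
      simp only [Pm, Bm, Matrix.of_apply, zf]; split_ifs <;> simp_all)]
    simp [Pm, zf, hv]

lemma PmulP : Pm p * Pm p = Pm p := by
  ext u v
  rw [Matrix.mul_apply, sum_form p hc0 hct 0 (zf p v) (fun w => by
    simp only [Pm, Matrix.of_apply, zf]; split_ifs <;> simp_all)]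
  simp [Pm, zf]

lemma PmulP' : Pm p * Pm' p = Jm p := by
  ext u v
  rw [Matrix.mul_apply, sum_form p hc0 hct 0 1 (fun w => by
    simp only [Pm, Pm', Matrix.of_apply, zf]; split_ifs <;> simp_all)]
  simp [Jm]

lemma P'mulZ : Pm' p * Zm p = Zm p := by
  ext u v
  rw [Matrix.mul_apply, sum_form p hc0 hct 0 (zf p u * zf p v) (fun w => by
    simp only [Pm', Zm, Matrix.of_apply, zf]; split_ifs <;> simp_all)]
  simp [Zm, zf]

lemma P'mulJ : Pm' p * Jm p = ((r*t+1 : ℝ)) • Pm' p := by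
  ext u v
  rw [Matrix.mul_apply]
  simp only [Pm', Jm, Matrix.of_apply, mul_one]
  rw [sum_const' (zf p u)]
  simp [Pm']

lemma P'mulB : Pm' p * Bm p = (t:ℝ) • Pm' p - ((t:ℝ)-1) • Zm p := by
  ext u v
  rw [Matrix.mul_apply]
  rw [sum_form p hc0 hct (p v) (zf p u) (fun w => by
    simp only [Pm', Bm, Matrix.of_apply]
    split_ifs <;> norm_num)]
  simp only [Pm', Zm, Matrix.of_apply, Matrix.smul_apply, Matrix.sub_apply, smul_eq_mul]
  by_cases hv : p v = 0
  · simp only [if_pos hv, zf, if_pos hv]; ring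
  · simp only [if_neg hv, zf, if_neg hv]; ring

lemma P'mulP : Pm' p * Pm p = ((r*t+1 : ℝ)) • Zm p := by
  ext u v
  rw [Matrix.mul_apply]
  simp only [Pm', Pm, Matrix.of_apply]
  rw [sum_const' (zf p u * zf p v)]
  simp [Zm]

lemma P'mulP' : Pm' p * Pm' p = Pm' p := by
  ext u v
  rw [Matrix.mul_apply, sum_form p hc0 hct 0 (zf p u) (fun w => by
    simp only [Pm', Matrix.of_apply, zf]; split_ifs <;> simp_all)]
  simp [Pm', zf]

end products

section structural

variable (p : Fin (r*t+1) → Fin (r+1))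
variable (hc0 : (Finset.univ.filter fun v => p v = 0).card = 1)
  (hct : ∀ i : Fin (r+1), i ≠ 0 → (Finset.univ.filter fun v => p v = i).card = t)

include hc0 hct in
lemma card_fiber (v : Fin (r*t+1)) :
    (Finset.univ.filter fun w => p w = p v).card = if p v = 0 then 1 else t := by
  by_cases hv : p v = 0
  · rw [if_pos hv]; simp only [hv]; exact hc0
  · rw [if_neg hv]; exact hct _ hv

include hc0 hct in
lemma degree_formula (G : SimpleGraph (Fin (r*t+1))) [DecidableRel G.Adj]
    (hp : IsCompleteMultipartiteWith G p) (v : Fin (r*t+1)) :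
    (G.degree v : ℝ) + (if p v = 0 then (1:ℝ) else t) = r*t+1 := by
  have h1 : G.neighborFinset v = Finset.univ.filter fun w => ¬ p w = p v := by
    ext w
    simp only [SimpleGraph.mem_neighborFinset, Finset.mem_filter, Finset.mem_univ, true_and]
    rw [hp v w]
    exact ⟨fun h hh => h hh.symm, fun h hh => h hh.symm⟩
  have h3 : G.degree v = (Finset.univ.filter fun w => ¬ p w = p v).card := by
    rw [SimpleGraph.degree, h1]
  have h2 := Finset.card_filter_add_card_filter_not
    (s := (Finset.univ : Finset (Fin (r*t+1)))) (p := fun w => p w = p v)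
  rw [card_fiber p hc0 hct v, Finset.card_univ, Fintype.card_fin] at h2
  by_cases hv : p v = 0
  · simp only [hv, if_true] at h2 h3 ⊢
    rw [h3]
    have h2' : (1:ℝ) + ((Finset.univ.filter fun w => ¬ p w = (0 : Fin (r+1))).card : ℝ)
        = r*t+1 := by exact_mod_cast h2
    linarith
  · simp only [hv, if_false] at h2 ⊢
    rw [h3]
    have h2' : (t:ℝ) + ((Finset.univ.filter fun w => ¬ p w = p v).card : ℝ) = r*t+1 := by
      exact_mod_cast h2
    linarith

include hc0 hct in
lemma Q_eq (G : SimpleGraph (Fin (r*t+1))) [DecidableRel G.Adj]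
    (hp : IsCompleteMultipartiteWith G p) :
    signlessLap G = ((r:ℝ)*t - t + 1) • (1 : Matrix (Fin (r*t+1)) (Fin (r*t+1)) ℝ)
      + ((t:ℝ)-1) • Zm p + Jm p - Bm p := by
  ext u v
  have hdeg := degree_formula p hc0 hct G hp u
  simp only [signlessLap, SimpleGraph.degMatrix, Matrix.add_apply, Matrix.sub_apply,
    Matrix.smul_apply, Matrix.diagonal_apply, SimpleGraph.adjMatrix_apply,
    Matrix.one_apply, Zm, Jm, Bm, Matrix.of_apply, smul_eq_mul]
  by_cases huv : u = v
  · subst huv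
    rw [if_pos rfl, if_pos rfl, if_neg (G.irrefl), if_pos rfl]
    by_cases hu : p u = 0
    · rw [if_pos hu] at hdeg
      simp only [zf, if_pos hu]
      linarith
    · rw [if_neg hu] at hdeg
      simp only [zf, if_neg hu]
      linarith
  · rw [if_neg huv, if_neg (fun h : u = v => huv h)]
    by_cases hpp : p u = p v
    · have h0 : zf p u * zf p v = zf p u := by
        simp only [zf]
        by_cases hu : p u = 0
        · rw [if_pos hu, if_pos (hpp ▸ hu)]; ring
        · rw [if_neg hu]; ring
      have h0' : zf p u = 0 := by
        simp only [zf]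
        by_cases hu : p u = 0
        · exact absurd (uniq0 p hc0 hu (hpp ▸ hu)) huv
        · rw [if_neg hu]
      rw [if_neg (fun h : G.Adj u v => ((hp u v).mp h) hpp), if_pos hpp, h0, h0']
      ring
    · rw [if_pos ((hp u v).mpr hpp), if_neg hpp, zf_mul_of_ne p hpp]
      ring

set_option maxHeartbeats 1000000 in
include hc0 hct in
lemma prodA :
    (((t:ℝ)-1) • Zm p + Jm p - Bm p) *
      ((t:ℝ) • 1 + ((t:ℝ)-1) • Zm p + Jm p - Bm p) =
    (2*((t:ℝ)-1)*((t:ℝ)-2)) • Zm p + ((r:ℝ)*t-t+1) • Jm p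
      + (2*((t:ℝ)-1)) • Pm p + (2*((t:ℝ)-1)) • Pm' p := by
  simp only [sub_mul, mul_sub, add_mul, mul_add, smul_mul_assoc, mul_smul_comm, one_mul,
    mul_one, smul_smul, smul_sub, smul_add,
    ZmulZ p hc0 hct, ZmulJ p hc0 hct, ZmulB p hc0 hct, ZmulP p hc0 hct, ZmulP' p hc0 hct,
    JmulZ p hc0 hct, JmulJ p hc0 hct, JmulB p hc0 hct, JmulP p hc0 hct, JmulP' p hc0 hct,
    BmulZ p hc0 hct, BmulJ p hc0 hct, BmulB p hc0 hct, BmulP p hc0 hct, BmulP' p hc0 hct,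
    PmulZ p hc0 hct, PmulJ p hc0 hct, PmulB p hc0 hct, PmulP p hc0 hct, PmulP' p hc0 hct,
    P'mulZ p hc0 hct, P'mulJ p hc0 hct, P'mulB p hc0 hct, P'mulP p hc0 hct, P'mulP' p hc0 hct]
  module

set_option maxHeartbeats 1000000 in
include hc0 hct in
lemma prodQQ :
    (((r:ℝ)*t-t+1) • (1 : Matrix (Fin (r*t+1)) (Fin (r*t+1)) ℝ) + ((t:ℝ)-1) • Zm p + Jm p - Bm p) *
      (((r:ℝ)*t-t+1) • 1 + ((t:ℝ)-1) • Zm p + Jm p - Bm p) =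
    (((r:ℝ)*t-t+1)^2) • 1 + ((((t:ℝ)-1))*(2*(r:ℝ)*t-t-2)) • Zm p
      + (3*(r:ℝ)*t-4*t+3) • Jm p + (3*(t:ℝ)-2*(r:ℝ)*t-2) • Bm p
      + (2*((t:ℝ)-1)) • Pm p + (2*((t:ℝ)-1)) • Pm' p := by
  simp only [sub_mul, mul_sub, add_mul, mul_add, smul_mul_assoc, mul_smul_comm, one_mul,
    mul_one, smul_smul, smul_sub, smul_add,
    ZmulZ p hc0 hct, ZmulJ p hc0 hct, ZmulB p hc0 hct, ZmulP p hc0 hct, ZmulP' p hc0 hct,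
    JmulZ p hc0 hct, JmulJ p hc0 hct, JmulB p hc0 hct, JmulP p hc0 hct, JmulP' p hc0 hct,
    BmulZ p hc0 hct, BmulJ p hc0 hct, BmulB p hc0 hct, BmulP p hc0 hct, BmulP' p hc0 hct,
    PmulZ p hc0 hct, PmulJ p hc0 hct, PmulB p hc0 hct, PmulP p hc0 hct, PmulP' p hc0 hct,
    P'mulZ p hc0 hct, P'mulJ p hc0 hct, P'mulB p hc0 hct, P'mulP p hc0 hct, P'mulP' p hc0 hct]
  push_cast
  module

set_option maxHeartbeats 1000000 in
include hc0 hct in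
lemma prodAF :
    ((2*((t:ℝ)-1)*((t:ℝ)-2)) • Zm p + ((r:ℝ)*t-t+1) • Jm p
      + (2*((t:ℝ)-1)) • Pm p + (2*((t:ℝ)-1)) • Pm' p) *
    (((t:ℝ)*(((r:ℝ)-1)*t-(2*(r:ℝ)-1))) • 1 + (-(((t:ℝ)-1)*((r:ℝ)*t-t+3))) • Zm p
      + (-(2*((t:ℝ)-1))) • Jm p + ((r:ℝ)*t+t-1) • Bm p
      + (2*((t:ℝ)-1)) • Pm p + (2*((t:ℝ)-1)) • Pm' p) = 0 := by
  simp only [sub_mul, mul_sub, add_mul, mul_add, smul_mul_assoc, mul_smul_comm, one_mul,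
    mul_one, smul_smul, smul_sub, smul_add, neg_smul, neg_mul, mul_neg, smul_neg,
    ZmulZ p hc0 hct, ZmulJ p hc0 hct, ZmulB p hc0 hct, ZmulP p hc0 hct, ZmulP' p hc0 hct,
    JmulZ p hc0 hct, JmulJ p hc0 hct, JmulB p hc0 hct, JmulP p hc0 hct, JmulP' p hc0 hct,
    BmulZ p hc0 hct, BmulJ p hc0 hct, BmulB p hc0 hct, BmulP p hc0 hct, BmulP' p hc0 hct,
    PmulZ p hc0 hct, PmulJ p hc0 hct, PmulB p hc0 hct, PmulP p hc0 hct, PmulP' p hc0 hct,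
    P'mulZ p hc0 hct, P'mulJ p hc0 hct, P'mulB p hc0 hct, P'mulP p hc0 hct, P'mulP' p hc0 hct]
  push_cast
  module

set_option maxHeartbeats 1000000 in
include hc0 hct in
lemma quartic (G : SimpleGraph (Fin (r*t+1))) [DecidableRel G.Adj]
    (hp : IsCompleteMultipartiteWith G p) :
    (signlessLap G - ((r:ℝ)*t - t + 1) • 1) * (signlessLap G - ((r:ℝ)*t - 2*t + 1) • 1) *
      (signlessLap G * signlessLap G - (3*(r:ℝ)*t - 2*t + 1) • signlessLap G
        + (2*(r:ℝ)*((r:ℝ)-1)*t^2) • 1) = 0 := by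
  have hQ := Q_eq p hc0 hct G hp
  have e1 : signlessLap G - ((r:ℝ)*t - t + 1) • 1 = ((t:ℝ)-1) • Zm p + Jm p - Bm p := by
    rw [hQ]; module
  have e2 : signlessLap G - ((r:ℝ)*t - 2*t + 1) • 1
      = (t:ℝ) • 1 + ((t:ℝ)-1) • Zm p + Jm p - Bm p := by
    rw [hQ]; module
  have e3 : signlessLap G * signlessLap G - (3*(r:ℝ)*t - 2*t + 1) • signlessLap G
        + (2*(r:ℝ)*((r:ℝ)-1)*t^2) • 1
      = ((t:ℝ)*(((r:ℝ)-1)*t-(2*(r:ℝ)-1))) • 1 + (-(((t:ℝ)-1)*((r:ℝ)*t-t+3))) • Zm p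
        + (-(2*((t:ℝ)-1))) • Jm p + ((r:ℝ)*t+t-1) • Bm p
        + (2*((t:ℝ)-1)) • Pm p + (2*((t:ℝ)-1)) • Pm' p := by
    rw [hQ, prodQQ p hc0 hct]
    module
  rw [e1, e2, e3, prodA p hc0 hct, prodAF p hc0 hct]

end structural
section spectral

lemma eig_mem_of_quartic {n : Type*} [Fintype n] [DecidableEq n] [Nonempty n]
    (M : Matrix n n ℝ) (a b c e : ℝ)
    (h : (M - a • 1) * (M - b • 1) * ((M - c • 1) * (M - e • 1)) = 0)
    {μ : ℝ} (hμ : μ ∈ spectrum ℝ M) : μ = a ∨ μ = b ∨ μ = c ∨ μ = e := by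
  classical
  have hp : (Polynomial.aeval M)
      ((Polynomial.X - Polynomial.C a) * (Polynomial.X - Polynomial.C b) *
        ((Polynomial.X - Polynomial.C c) * (Polynomial.X - Polynomial.C e))) = 0 := by
    simp only [_root_.map_mul, map_sub, Polynomial.aeval_X, Polynomial.aeval_C,
      Algebra.algebraMap_eq_smul_one]
    exact h
  have hsub := spectrum.subset_polynomial_aeval M
    ((Polynomial.X - Polynomial.C a) * (Polynomial.X - Polynomial.C b) *
      ((Polynomial.X - Polynomial.C c) * (Polynomial.X - Polynomial.C e)))
    ⟨μ, hμ, rfl⟩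
  rw [hp, spectrum.zero_eq] at hsub
  simp only [Set.mem_singleton_iff, Polynomial.eval_mul, Polynomial.eval_sub,
    Polynomial.eval_X, Polynomial.eval_C, mul_eq_zero, sub_eq_zero] at hsub
  tauto

lemma factor2 {n : Type*} [Fintype n] [DecidableEq n] (M : Matrix n n ℝ) (c e : ℝ) :
    (M - c • 1) * (M - e • 1) = M * M - (c + e) • M + (c * e) • 1 := by
  simp only [sub_mul, mul_sub, smul_mul_assoc, mul_smul_comm, mul_one, one_mul, smul_smul,
    add_smul]
  module

lemma kthEig_one_eq {V : Type*} [Fintype V] [DecidableEq V] {M : Matrix V V ℝ}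
    (hM : M.IsHermitian) {q : ℝ} (hub : ∀ i, hM.eigenvalues i ≤ q)
    (hmem : ∃ i, hM.eigenvalues i = q) : kthEig M 1 = q := by
  obtain ⟨i0, hi0⟩ := hmem
  have hpos : 0 < Fintype.card V := Fintype.card_pos_iff.mpr ⟨i0⟩
  have hlt : 1 - 1 < Fintype.card V := by simpa using hpos
  unfold kthEig
  rw [dif_pos hM, dif_pos hlt]
  set f : Fin (Fintype.card V) → ℝ := hM.eigenvalues ∘ (Fintype.equivFin V).symm with hf
  set σ := Tuple.sort f with hσ
  have hmono : Monotone (f ∘ σ) := Tuple.monotone_sort f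
  apply le_antisymm
  · exact hub _
  · have h0 : q = (f ∘ σ) (σ⁻¹ ((Fintype.equivFin V) i0)) := by
      simp only [Function.comp_apply, Equiv.Perm.inv_def, Equiv.apply_symm_apply, hf, Equiv.symm_apply_apply,
        hi0]
    rw [h0]
    apply hmono
    have hj := (σ⁻¹ ((Fintype.equivFin V) i0)).isLt
    rw [Fin.le_def, Fin.val_rev]
    have h00 : ((⟨1-1, hlt⟩ : Fin (Fintype.card V))).val = 0 := rfl
    rw [h00]
    omega

end spectral

end K1ttAux


open K1ttAux in
/-- Let `r, t ≥ 2` and let `G = K_{1,t,…,t}` be the complete `(r+1)`-partite graph with one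
part of size `1` and `r` parts of size `t`. Then
`q₁(G) = (3tr - 2t + 1 + √(t²(r-2)² + 2t(3r-2) + 1)) / 2`. -/
theorem q1_of_K1tt (r t : ℕ) (hr : 2 ≤ r) (ht : 2 ≤ t)
    (G : SimpleGraph (Fin (r * t + 1))) [DecidableRel G.Adj]
    (p : Fin (r * t + 1) → Fin (r + 1))
    (hp : IsCompleteMultipartiteWith G p)
    (h0 : {v | p v = 0}.ncard = 1)
    (hi : ∀ i : Fin (r + 1), i ≠ 0 → {v | p v = i}.ncard = t) :
    qEig G 1 = (3 * (t : ℝ) * r - 2 * t + 1 +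
        Real.sqrt ((t : ℝ) ^ 2 * ((r : ℝ) - 2) ^ 2 + 2 * t * (3 * r - 2) + 1)) / 2 := by
  classical
  have hc0 : (Finset.univ.filter fun v => p v = 0).card = 1 := by
    have h := h0
    rwa [Set.ncard_eq_toFinset_card', Set.toFinset_setOf] at h
  have hct : ∀ i : Fin (r+1), i ≠ 0 → (Finset.univ.filter fun v => p v = i).card = t := by
    intro i hine
    have h := hi i hine
    rwa [Set.ncard_eq_toFinset_card', Set.toFinset_setOf] at h
  have hr' : (2:ℝ) ≤ r := by exact_mod_cast hr
  have ht' : (2:ℝ) ≤ t := by exact_mod_cast ht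
  set Δ : ℝ := (t : ℝ) ^ 2 * ((r : ℝ) - 2) ^ 2 + 2 * t * (3 * r - 2) + 1 with hΔdef
  have hΔ0 : (0:ℝ) ≤ Δ := by rw [hΔdef]; nlinarith
  set s : ℝ := Real.sqrt Δ with hsdef
  have hs0 : (0:ℝ) ≤ s := Real.sqrt_nonneg _
  have hss : s ^ 2 = Δ := Real.sq_sqrt hΔ0
  set qq : ℝ := (3 * (t : ℝ) * r - 2 * t + 1 + s) / 2 with hqqdef
  set q2 : ℝ := (3 * (t : ℝ) * r - 2 * t + 1 - s) / 2 with hq2def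
  -- the quadratic relation for qq
  have hkey : qq ^ 2 - (3*(r:ℝ)*t - 2*t + 1) * qq + 2*(r:ℝ)*((r:ℝ)-1)*t^2 = 0 := by
    rw [hqqdef]
    linear_combination (1/4 : ℝ) * hss
  -- Hermitian
  have hherm : (signlessLap G).IsHermitian := by
    rw [Matrix.IsHermitian, Matrix.conjTranspose_eq_transpose_of_trivial]
    show (G.degMatrix ℝ + G.adjMatrix ℝ)ᵀ = _
    rw [Matrix.transpose_add,
      show (G.degMatrix ℝ)ᵀ = G.degMatrix ℝ from G.isSymm_degMatrix ℝ,
      show (G.adjMatrix ℝ)ᵀ = G.adjMatrix ℝ from G.isSymm_adjMatrix]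
    rfl
  -- quartic with linear factors
  have hq4 : (signlessLap G - ((r:ℝ)*t - t + 1) • 1) * (signlessLap G - ((r:ℝ)*t - 2*t + 1) • 1) *
      ((signlessLap G - qq • 1) * (signlessLap G - q2 • 1)) = 0 := by
    have hfac : (signlessLap G - qq • 1) * (signlessLap G - q2 • 1)
        = signlessLap G * signlessLap G - (3*(r:ℝ)*t - 2*t + 1) • signlessLap G
          + (2*(r:ℝ)*((r:ℝ)-1)*t^2) • 1 := by
      rw [factor2]
      have h1 : qq + q2 = 3*(r:ℝ)*t - 2*t + 1 := by rw [hqqdef, hq2def]; ring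
      have h2 : qq * q2 = 2*(r:ℝ)*((r:ℝ)-1)*t^2 := by
        rw [hqqdef, hq2def]
        linear_combination (-1/4 : ℝ) * hss
      rw [h1, h2]
    rw [hfac]
    exact quartic p hc0 hct G hp
  -- all eigenvalues are at most qq
  have hub : ∀ i, hherm.eigenvalues i ≤ qq := by
    intro i
    rcases eig_mem_of_quartic (signlessLap G) _ _ _ _ hq4
      (hherm.eigenvalues_mem_spectrum_real i) with h | h | h | h
    · rw [h, hqqdef]; nlinarith
    · rw [h, hqqdef]; nlinarith
    · exact le_of_eq h
    · rw [h, hq2def, hqqdef]; linarith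
  -- qq is an eigenvalue: eigenvector
  have hmem : ∃ i, hherm.eigenvalues i = qq := by
    set aa : ℝ := qq - (2*((r:ℝ)-1)*t + 1) with haadef
    set x : Fin (r*t+1) → ℝ := fun v => if p v = 0 then aa else 1 with hxdef
    have hxv : ∀ v, x v = if p v = 0 then aa else 1 := fun v => rfl
    have hQE := Q_eq p hc0 hct G hp
    have key : ∀ u, (signlessLap G *ᵥ x) u = qq * x u := by
      intro u
      have e1 : (signlessLap G *ᵥ x) u = ∑ v, (signlessLap G) u v * x v := rfl
      rw [e1, hQE]
      have e2 : ∀ v, ((((r:ℝ)*t - t + 1) • (1 : Matrix (Fin (r*t+1)) (Fin (r*t+1)) ℝ)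
            + ((t:ℝ)-1) • Zm p + Jm p - Bm p) u v) * x v
          = ((r:ℝ)*t - t + 1) * ((if u = v then (1:ℝ) else 0) * x v)
            + (((t:ℝ)-1) * zf p u) * (zf p v * x v) + x v - Bm p u v * x v := by
        intro v
        simp only [Matrix.add_apply, Matrix.sub_apply, Matrix.smul_apply, Matrix.one_apply,
          Zm, Jm, Matrix.of_apply, smul_eq_mul]
        ring
      rw [Finset.sum_congr rfl fun v _ => e2 v]
      rw [Finset.sum_sub_distrib, Finset.sum_add_distrib, Finset.sum_add_distrib,
        ← Finset.mul_sum, ← Finset.mul_sum]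
      have hS1 : ∑ v, (if u = v then (1:ℝ) else 0) * x v = x u := by simp
      have hS2 : ∑ v, zf p v * x v = aa := by
        rw [sum_form p hc0 hct 0 aa (fun w => by
          rw [hxv w]; simp only [zf]; split_ifs <;> ring)]
        simp
      have hS3 : ∑ v, x v = aa + r*t := by
        have e3 : ∀ v, x v = (if p v = 0 then aa - 1 else 0) + 1 := fun v => by
          rw [hxv v]; split_ifs <;> ring
        rw [Finset.sum_congr rfl fun v _ => e3 v, Finset.sum_add_distrib,
          sum_form p hc0 hct 0 (aa-1) (fun w => rfl), sum_const' (1:ℝ)]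
        simp
      have hS4 : ∑ v, Bm p u v * x v = if p u = 0 then aa else (t:ℝ) := by
        by_cases hu : p u = 0
        · rw [if_pos hu, sum_form p hc0 hct 0 aa (fun w => by
            rw [Bm_apply' p u w, hxv w]; simp only [hu]; split_ifs <;> ring)]
          simp
        · rw [if_neg hu, sum_form p hc0 hct (p u) 1 (fun w => by
            rw [Bm_apply' p u w, hxv w]
            by_cases hw : p w = p u
            · rw [if_pos hw, if_neg (fun h : p w = 0 => hu (hw.symm.trans h))]; ring
            · rw [if_neg hw]; ring)]
          simp [hu]
      rw [hS1, hS2, hS3, hS4]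
      by_cases hu : p u = 0
      · rw [if_pos hu, hxv u, if_pos hu]
        simp only [zf, if_pos hu]
        rw [haadef]
        linear_combination (-1 : ℝ) * hkey
      · rw [if_neg hu, hxv u, if_neg hu]
        simp only [zf, if_neg hu]
        rw [haadef]
        ring
    have hx0 : x ≠ 0 := by
      have hi1 : (1 : Fin (r+1)) ≠ 0 → True := fun _ => trivial
      obtain ⟨v1, hv1⟩ : ∃ v1, p v1 = (⟨1, by omega⟩ : Fin (r+1)) := by
        have hcard := hct ⟨1, by omega⟩ (by simp [Fin.ext_iff])
        have : (Finset.univ.filter fun v => p v = (⟨1, by omega⟩ : Fin (r+1))).Nonempty := by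
          rw [← Finset.card_pos, hcard]; omega
        obtain ⟨v1, hv1⟩ := this
        exact ⟨v1, (Finset.mem_filter.mp hv1).2⟩
      intro hcon
      have : x v1 = 0 := by rw [hcon]; rfl
      rw [hxv v1, if_neg (by rw [hv1]; simp [Fin.ext_iff])] at this
      exact one_ne_zero this
    have hq_spec : qq ∈ spectrum ℝ (signlessLap G) := by
      rw [spectrum.mem_iff]
      intro hun
      rw [Algebra.algebraMap_eq_smul_one] at hun
      have hdet0 : (qq • 1 - signlessLap G).det = 0 := by
        rw [← Matrix.exists_mulVec_eq_zero_iff]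
        refine ⟨x, hx0, ?_⟩
        funext u
        simp only [Matrix.sub_mulVec, Matrix.smul_mulVec, Matrix.one_mulVec,
          Pi.sub_apply, Pi.smul_apply, smul_eq_mul, Pi.zero_apply]
        rw [key u]
        ring
      have := (Matrix.isUnit_iff_isUnit_det _).mp hun
      rw [hdet0] at this
      exact (isUnit_iff_ne_zero.mp this) rfl
    rw [hherm.spectrum_real_eq_range_eigenvalues] at hq_spec
    obtain ⟨i, hi'⟩ := hq_spec
    exact ⟨i, hi'⟩
  exact kthEig_one_eq hherm hub hmem
end

section
/- Let r ≥ 2 and t ≥ 2 with t > 2 + 1/(r−1), and let G = K_{1,t,…,t} be the complete (r+1)-partite graph with one part of size 1 and r parts of size t. Then q₂(G) = (3tr − 2t + 1 − √(t²(r−2)² + 2t(3r−2) + 1)) / 2 > δ(G), where δ(G) = t(r−1) + 1 is the minimum degree of G. -/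
open Matrix SimpleGraph
open scoped Classical

namespace K1tt
open Finset

/-- Helmert vector entries. -/
noncomputable def hel (m i : ℕ) : ℝ := if i ≤ m then 1 else if i = m + 1 then -((m : ℝ) + 1) else 0

lemma hel_of_le {m i : ℕ} (h : i ≤ m) : hel m i = 1 := if_pos h

lemma hel_succ (m : ℕ) : hel m (m+1) = -((m : ℝ)+1) := by
  rw [hel, if_neg (by omega), if_pos rfl]

lemma hel_of_gt {m i : ℕ} (h : m + 1 < i) : hel m i = 0 := by
  rw [hel, if_neg (by omega), if_neg (by omega)]

lemma sum_hel {m n : ℕ} (h : m + 1 < n) : ∑ i ∈ range n, hel m i = 0 := by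
  have h1 : ∑ i ∈ range n, hel m i = ∑ i ∈ range (m+2), hel m i := by
    refine (Finset.sum_subset (by intro x hx; simp only [mem_range] at *; omega) ?_).symm
    intro x _ hx
    simp only [mem_range] at hx
    exact hel_of_gt (by omega)
  rw [h1, Finset.sum_range_succ]
  have h2 : ∑ i ∈ range (m+1), hel m i = ∑ i ∈ range (m+1), (1:ℝ) := by
    refine Finset.sum_congr rfl fun x hx => ?_
    simp only [mem_range] at hx
    exact hel_of_le (by omega)
  rw [h2, hel_succ]
  simp only [Finset.sum_const, card_range, nsmul_eq_mul, mul_one]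
  push_cast
  ring

lemma hel_mul_hel {m l : ℕ} (hml : m < l) (i : ℕ) : hel m i * hel l i = hel m i := by
  rcases le_or_gt i m with h | h
  · rw [hel_of_le (show i ≤ l by omega), mul_one]
  rcases eq_or_lt_of_le (show m + 1 ≤ i by omega) with h2 | h2
  · rw [hel_of_le (show i ≤ l by omega), mul_one]
  · rw [hel_of_gt (by omega), zero_mul]

lemma sum_hel_mul {m l n : ℕ} (hml : m < l) (h : m + 1 < n) :
    ∑ i ∈ range n, hel m i * hel l i = 0 := by
  simp_rw [hel_mul_hel hml]
  exact sum_hel h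

lemma sum_hel_mul' {m l n : ℕ} (hml : m ≠ l) (hm : m + 1 < n) (hl : l + 1 < n) :
    ∑ i ∈ range n, hel m i * hel l i = 0 := by
  rcases lt_or_gt_of_ne hml with h | h
  · exact sum_hel_mul h hm
  · rw [← sum_hel_mul h hl]
    exact Finset.sum_congr rfl fun i _ => mul_comm _ _

lemma sum_hel_sq {m n : ℕ} (h : m + 1 < n) :
    ∑ i ∈ range n, hel m i * hel m i = ((m:ℝ)+1) + ((m:ℝ)+1)^2 := by
  have h1 : ∑ i ∈ range n, hel m i * hel m i = ∑ i ∈ range (m+2), hel m i * hel m i := by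
    refine (Finset.sum_subset (by intro x hx; simp only [mem_range] at *; omega) ?_).symm
    intro x _ hx
    simp only [mem_range] at hx
    rw [hel_of_gt (by omega), zero_mul]
  rw [h1, Finset.sum_range_succ]
  have h2 : ∑ i ∈ range (m+1), hel m i * hel m i = ∑ i ∈ range (m+1), (1:ℝ) := by
    refine Finset.sum_congr rfl fun x hx => ?_
    simp only [mem_range] at hx
    rw [hel_of_le (by omega)]; ring
  rw [h2, hel_succ]
  simp only [Finset.sum_const, card_range, nsmul_eq_mul, mul_one]
  push_cast
  ring


section Arith
variable (r t : ℕ)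

noncomputable def TT : ℝ := 3*(t:ℝ)*r - 2*t + 1
noncomputable def Dl : ℝ := (t:ℝ)^2*((r:ℝ)-2)^2 + 2*t*(3*r-2) + 1
noncomputable def DD : ℝ := 2*(r:ℝ)*(t:ℝ)^2*((r:ℝ)-1)
noncomputable def qp : ℝ := (TT r t + Real.sqrt (Dl r t))/2
noncomputable def qm : ℝ := (TT r t - Real.sqrt (Dl r t))/2
noncomputable def a1 : ℝ := (r:ℝ)*t+1-t
noncomputable def a2 : ℝ := (r:ℝ)*t+1-2*t

lemma Dl_eq : Dl r t = TT r t ^ 2 - 4 * DD r t := by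
  simp only [Dl, TT, DD]; ring

variable {r t} (hr : 2 ≤ r) (ht : 2 ≤ t) (htr : 2 + 1 / ((r : ℝ) - 1) < (t : ℝ))

include hr ht in
lemma Dl_pos : 0 < Dl r t := by
  have hr' : (2:ℝ) ≤ r := by exact_mod_cast hr
  have ht' : (2:ℝ) ≤ t := by exact_mod_cast ht
  have h1 : (0:ℝ) ≤ (t:ℝ)^2*((r:ℝ)-2)^2 := by positivity
  have h2 : (0:ℝ) ≤ 2*(t:ℝ)*(3*(r:ℝ)-2) := by nlinarith
  simp only [Dl]; nlinarith

include hr ht in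
lemma sqrt_Dl_pos : 0 < Real.sqrt (Dl r t) := Real.sqrt_pos.mpr (Dl_pos hr ht)

include hr ht in
lemma sq_sqrt_Dl : Real.sqrt (Dl r t) ^ 2 = Dl r t := Real.sq_sqrt (Dl_pos hr ht).le

include hr ht in
lemma qp_root : qp r t ^ 2 - TT r t * qp r t + DD r t = 0 := by
  have h := sq_sqrt_Dl hr ht
  have h2 := Dl_eq r t
  simp only [qp]; linear_combination h/4 + h2/4

include hr ht in
lemma qm_root : qm r t ^ 2 - TT r t * qm r t + DD r t = 0 := by
  have h := sq_sqrt_Dl hr ht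
  have h2 := Dl_eq r t
  simp only [qm]; linear_combination h/4 + h2/4

lemma qp_add_qm : qp r t + qm r t = TT r t := by simp only [qp, qm]; ring

include hr ht in
lemma qp_mul_qm : qp r t * qm r t = DD r t := by
  have h := sq_sqrt_Dl hr ht
  have h2 := Dl_eq r t
  simp only [qp, qm]; linear_combination -h/4 - h2/4

include hr ht htr in
lemma sqrt_Dl_lt : Real.sqrt (Dl r t) < (r:ℝ)*t - 1 := by
  have hr' : (2:ℝ) ≤ r := by exact_mod_cast hr
  have ht' : (2:ℝ) ≤ t := by exact_mod_cast ht
  have hr1 : (0:ℝ) < (r:ℝ) - 1 := by linarith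
  have key : 1 < ((t:ℝ) - 2) * ((r:ℝ) - 1) := by
    have := (div_lt_iff₀ hr1).mp (by linarith [htr] : 1 / ((r:ℝ) - 1) < (t:ℝ) - 2)
    linarith
  have hpos : (0:ℝ) < (r:ℝ)*t - 1 := by nlinarith
  rw [show ((r:ℝ)*t - 1) = Real.sqrt (((r:ℝ)*t-1)^2) by
    rw [Real.sqrt_sq hpos.le]]
  apply Real.sqrt_lt_sqrt (Dl_pos hr ht).le
  simp only [Dl]; nlinarith

include hr ht htr in
lemma a1_lt_qm : a1 r t < qm r t := by
  have h := sqrt_Dl_lt hr ht htr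
  simp only [a1, qm, TT]; linarith

include hr ht htr in
lemma a2_lt_qm : a2 r t < qm r t := by
  have h := a1_lt_qm hr ht htr
  have ht' : (2:ℝ) ≤ t := by exact_mod_cast ht
  simp only [a2] at *; simp only [a1] at h; linarith

include hr ht in
lemma qm_lt_qp : qm r t < qp r t := by
  have h := sqrt_Dl_pos hr ht
  simp only [qp, qm]; linarith

end Arith

section Mats
variable (r t : ℕ)

abbrev W := Unit ⊕ Fin r × Fin t

def pW : W r t → Fin (r+1) := Sum.elim (fun _ => 0) (fun jk => Fin.succ jk.1)

noncomputable def d : W r t → ℝ :=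
  Sum.elim (fun _ => qp r t)
    (fun jk => if (jk.2:ℕ) = t-1 then (if (jk.1:ℕ) = r-1 then qm r t else a2 r t) else a1 r t)

noncomputable def col : W r t → W r t → ℝ := fun c =>
  Sum.elim
    (fun _ => Sum.elim (fun _ => (r:ℝ)*t) (fun _ => qp r t - (r:ℝ)*t))
    (fun j₀k₀ =>
      if (j₀k₀.2:ℕ) = t-1 then
        (if (j₀k₀.1:ℕ) = r-1 then Sum.elim (fun _ => (r:ℝ)*t) (fun _ => qm r t - (r:ℝ)*t)
         else Sum.elim (fun _ => 0) (fun jk => hel j₀k₀.1 jk.1))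
      else Sum.elim (fun _ => 0) (fun jk => if jk.1 = j₀k₀.1 then hel j₀k₀.2 jk.2 else 0)) c

noncomputable def P : Matrix (W r t) (W r t) ℝ := Matrix.of fun x c => col r t c x

noncomputable def Q' : Matrix (W r t) (W r t) ℝ := Matrix.of fun x y =>
  (if x = y then Sum.elim (fun _ => (r:ℝ)*t) (fun _ => a1 r t) x else 0) +
  (if pW r t x ≠ pW r t y then 1 else 0)

lemma sum_W (F : W r t → ℝ) :
    ∑ x, F x = F (Sum.inl ()) + ∑ j : Fin r, ∑ k : Fin t, F (Sum.inr (j, k)) := by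
  rw [Fintype.sum_sum_type, Fintype.sum_prod_type]
  simp

lemma pW_inl (u : Unit) : pW r t (Sum.inl u) = 0 := rfl

lemma pW_inr (j : Fin r) (k : Fin t) : pW r t (Sum.inr (j, k)) = Fin.succ j := rfl

lemma psum_inl (F : W r t → ℝ) :
    ∑ y, (if pW r t y = 0 then F y else 0) = F (Sum.inl ()) := by
  rw [sum_W]
  simp [pW, Fin.succ_ne_zero]

lemma psum_inr (F : W r t → ℝ) (j : Fin r) :
    ∑ y, (if pW r t y = Fin.succ j then F y else 0) = ∑ k : Fin t, F (Sum.inr (j, k)) := by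
  rw [sum_W]
  have h0 : ¬((0 : Fin (r+1)) = Fin.succ j) := (Fin.succ_ne_zero j).symm
  rw [pW_inl, if_neg h0, zero_add]
  simp only [pW, Sum.elim_inl, Sum.elim_inr, if_neg h0, zero_add, Fin.succ_inj]
  calc ∑ j' : Fin r, ∑ k : Fin t, (if j' = j then F (Sum.inr (j', k)) else 0)
      = ∑ j' : Fin r, (if j' = j then ∑ k : Fin t, F (Sum.inr (j', k)) else 0) := by
        refine Finset.sum_congr rfl fun j' _ => ?_
        by_cases hjj : j' = j <;> simp [hjj]
    _ = ∑ k : Fin t, F (Sum.inr (j, k)) := by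
        rw [Finset.sum_ite_eq' Finset.univ j]
        simp

lemma sum_fin_hel {n m : ℕ} (h : m + 1 < n) : ∑ k : Fin n, hel m (k:ℕ) = 0 := by
  rw [Fin.sum_univ_eq_sum_range (fun i => hel m i)]
  exact sum_hel h

lemma kbound {n : ℕ} {k₀ : Fin n} (hk : ¬((k₀:ℕ) = n-1)) : (k₀:ℕ) + 1 < n := by
  have := k₀.isLt; omega

lemma mul_eq (hr : 2 ≤ r) (ht : 2 ≤ t) : Q' r t * P r t = P r t * Matrix.diagonal (d r t) := by
  ext x c
  rw [Matrix.mul_apply, Matrix.mul_diagonal]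
  have expand : ∀ y, Q' r t x y * P r t y c =
      (if x = y then Sum.elim (fun _ => (r:ℝ)*t) (fun _ => a1 r t) x * P r t y c else 0) +
      (P r t y c - (if pW r t y = pW r t x then P r t y c else 0)) := by
    intro y
    simp only [Q', Matrix.of_apply, ne_eq]
    by_cases h1 : x = y
    · subst h1; simp
    · by_cases h2 : pW r t x = pW r t y
      · rw [if_neg h1, if_neg (not_not_intro h2), if_neg h1, if_pos h2.symm]; ring
      · rw [if_neg h1, if_pos h2, if_neg h1, if_neg (fun h => h2 h.symm)]; ring
  rw [Finset.sum_congr rfl fun y _ => expand y, Finset.sum_add_distrib,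
    Finset.sum_sub_distrib, Finset.sum_ite_eq Finset.univ x, if_pos (Finset.mem_univ x)]
  rcases c with u | ⟨j₀, k₀⟩
  · -- column A : eigenvalue qp
    obtain ⟨⟩ := u
    have htot : ∑ y, P r t y (Sum.inl ()) = (r:ℝ)*t + (r:ℝ)*((t:ℝ)*(qp r t - (r:ℝ)*t)) := by
      rw [sum_W]
      simp [P, col, Finset.sum_const, Finset.card_univ]
      ring
    rw [htot]
    rcases x with u | ⟨j, k⟩
    · obtain ⟨⟩ := u
      rw [pW_inl, psum_inl]
      simp only [P, Matrix.of_apply, col, d, Sum.elim_inl]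
      ring
    · rw [pW_inr, psum_inr]
      have hroot := qp_root hr ht
      simp only [TT, DD] at hroot
      simp only [P, Matrix.of_apply, col, d, Sum.elim_inl, Sum.elim_inr,
        Finset.sum_const, Finset.card_univ, Fintype.card_fin, nsmul_eq_mul, a1]
      linear_combination -hroot
  · by_cases hk : (k₀:ℕ) = t-1
    · by_cases hj : (j₀:ℕ) = r-1
      · -- column D : eigenvalue qm
        have hcol : ∀ y, P r t y (Sum.inr (j₀,k₀)) =
            Sum.elim (fun _ => (r:ℝ)*t) (fun _ => qm r t - (r:ℝ)*t) y := by
          intro y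
          simp only [P, Matrix.of_apply, col, Sum.elim_inr, if_pos hk, if_pos hj]
        have hd : d r t (Sum.inr (j₀,k₀)) = qm r t := by
          simp only [d, Sum.elim_inr, if_pos hk, if_pos hj]
        have htot : ∑ y, P r t y (Sum.inr (j₀,k₀)) = (r:ℝ)*t + (r:ℝ)*((t:ℝ)*(qm r t - (r:ℝ)*t)) := by
          rw [sum_W]
          simp [hcol, Finset.sum_const, Finset.card_univ]
          ring
        rw [htot, hd]
        rcases x with u | ⟨j, k⟩
        · obtain ⟨⟩ := u
          rw [pW_inl, psum_inl]
          simp only [hcol, Sum.elim_inl, Sum.elim_inr]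
          ring
        · rw [pW_inr, psum_inr]
          have hroot := qm_root hr ht
          simp only [TT, DD] at hroot
          simp only [hcol, Sum.elim_inl, Sum.elim_inr,
            Finset.sum_const, Finset.card_univ, Fintype.card_fin, nsmul_eq_mul, a1]
          linear_combination -hroot
      · -- column C : eigenvalue a2
        have hbj : (j₀:ℕ) + 1 < r := kbound hj
        have hcol : ∀ y, P r t y (Sum.inr (j₀,k₀)) =
            Sum.elim (fun _ => (0:ℝ)) (fun jk => hel j₀ jk.1) y := by
          intro y
          simp only [P, Matrix.of_apply, col, Sum.elim_inr, if_pos hk, if_neg hj]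
        have hd : d r t (Sum.inr (j₀,k₀)) = a2 r t := by
          simp only [d, Sum.elim_inr, if_pos hk, if_neg hj]
        have htot : ∑ y, P r t y (Sum.inr (j₀,k₀)) = 0 := by
          rw [sum_W]
          simp only [hcol, Sum.elim_inl, Sum.elim_inr, zero_add, Finset.sum_const,
            Finset.card_univ, Fintype.card_fin, nsmul_eq_mul]
          rw [← Finset.mul_sum, sum_fin_hel hbj, mul_zero]
        rw [htot, hd]
        rcases x with u | ⟨j, k⟩
        · obtain ⟨⟩ := u
          rw [pW_inl, psum_inl]
          simp only [hcol, Sum.elim_inl, Sum.elim_inr]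
          ring
        · rw [pW_inr, psum_inr]
          simp only [hcol, Sum.elim_inl, Sum.elim_inr,
            Finset.sum_const, Finset.card_univ, Fintype.card_fin, nsmul_eq_mul, a1, a2]
          ring
    · -- column B : eigenvalue a1
      have hbk : (k₀:ℕ) + 1 < t := kbound hk
      have hcol : ∀ y, P r t y (Sum.inr (j₀,k₀)) =
          Sum.elim (fun _ => (0:ℝ)) (fun jk => if jk.1 = j₀ then hel k₀ jk.2 else 0) y := by
        intro y
        simp only [P, Matrix.of_apply, col, Sum.elim_inr, if_neg hk]
      have hd : d r t (Sum.inr (j₀,k₀)) = a1 r t := by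
        simp only [d, Sum.elim_inr, if_neg hk]
      have hin : ∀ j : Fin r, ∑ k : Fin t, (if j = j₀ then hel (k₀:ℕ) ((k:Fin t):ℕ) else 0) = 0 := by
        intro j
        by_cases hjj : j = j₀
        · simp only [if_pos hjj]
          exact sum_fin_hel hbk
        · simp [hjj]
      have htot : ∑ y, P r t y (Sum.inr (j₀,k₀)) = 0 := by
        rw [sum_W]
        simp only [hcol, Sum.elim_inl, Sum.elim_inr, zero_add]
        rw [Finset.sum_congr rfl fun j _ => hin j]
        simp
      rw [htot, hd]
      rcases x with u | ⟨j, k⟩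
      · obtain ⟨⟩ := u
        rw [pW_inl, psum_inl]
        simp only [hcol, Sum.elim_inl, Sum.elim_inr]
        ring
      · rw [pW_inr, psum_inr]
        simp only [hcol, Sum.elim_inl, Sum.elim_inr]
        rw [hin j]
        ring

end Mats

section Orth
variable (r t : ℕ)

noncomputable def nu : W r t → ℝ :=
  Sum.elim (fun _ => ((r:ℝ)*t)^2 + (r:ℝ)*t*(qp r t - (r:ℝ)*t)^2)
    (fun jk => if (jk.2:ℕ) = t-1 then
        (if (jk.1:ℕ) = r-1 then ((r:ℝ)*t)^2 + (r:ℝ)*t*(qm r t - (r:ℝ)*t)^2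
         else (t:ℝ)*((((jk.1:ℕ)):ℝ)+1 + (((jk.1:ℕ):ℝ)+1)^2))
      else ((((jk.2:ℕ)):ℝ)+1 + (((jk.2:ℕ):ℝ)+1)^2))

lemma col_A : col r t (Sum.inl ()) =
    Sum.elim (fun _ => (r:ℝ)*t) (fun _ => qp r t - (r:ℝ)*t) := rfl

lemma col_B (j₀ : Fin r) (k₀ : Fin t) (hk : ¬((k₀:ℕ) = t-1)) :
    col r t (Sum.inr (j₀,k₀)) =
      Sum.elim (fun _ => (0:ℝ)) (fun jk => if jk.1 = j₀ then hel k₀ jk.2 else 0) := by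
  funext y
  simp only [col, Sum.elim_inr, if_neg hk]

lemma col_C (j₀ : Fin r) (k₀ : Fin t) (hk : (k₀:ℕ) = t-1) (hj : ¬((j₀:ℕ) = r-1)) :
    col r t (Sum.inr (j₀,k₀)) = Sum.elim (fun _ => (0:ℝ)) (fun jk => hel j₀ jk.1) := by
  funext y
  simp only [col, Sum.elim_inr, if_pos hk, if_neg hj]

lemma col_D (j₀ : Fin r) (k₀ : Fin t) (hk : (k₀:ℕ) = t-1) (hj : (j₀:ℕ) = r-1) :
    col r t (Sum.inr (j₀,k₀)) =
      Sum.elim (fun _ => (r:ℝ)*t) (fun _ => qm r t - (r:ℝ)*t) := by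
  funext y
  simp only [col, Sum.elim_inr, if_pos hk, if_pos hj]

lemma sum_fin_hel_mul' {n m l : ℕ} (hml : m ≠ l) (hm : m + 1 < n) (hl : l + 1 < n) :
    ∑ k : Fin n, hel m (k:ℕ) * hel l (k:ℕ) = 0 := by
  rw [Fin.sum_univ_eq_sum_range (fun i => hel m i * hel l i)]
  exact sum_hel_mul' hml hm hl

lemma sum_fin_hel_sq {n m : ℕ} (h : m + 1 < n) :
    ∑ k : Fin n, hel m (k:ℕ) * hel m (k:ℕ) = ((m:ℝ)+1) + ((m:ℝ)+1)^2 := by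
  rw [Fin.sum_univ_eq_sum_range (fun i => hel m i * hel m i)]
  exact sum_hel_sq h

lemma sum_hel_lin {n m : ℕ} (h : m + 1 < n) (g : Fin n → ℝ) (a : ℝ)
    (hg : ∀ j, g j = a * hel m (j:ℕ)) : ∑ j, g j = 0 := by
  rw [Finset.sum_congr rfl fun j _ => hg j, ← Finset.mul_sum, sum_fin_hel h, mul_zero]

lemma sum_if_hel_mul {t' m : ℕ} (h : m + 1 < t') (co : Prop) [Decidable co] (a : ℝ) :
    ∑ k : Fin t', (if co then hel m (k:ℕ) else 0) * a = 0 := by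
  by_cases hc : co
  · simp only [if_pos hc]
    exact sum_hel_lin h _ a (fun k => by ring)
  · simp [hc]

lemma sum_mul_if_hel {t' m : ℕ} (h : m + 1 < t') (co : Prop) [Decidable co] (a : ℝ) :
    ∑ k : Fin t', a * (if co then hel m (k:ℕ) else 0) = 0 := by
  by_cases hc : co
  · simp only [if_pos hc]
    exact sum_hel_lin h _ a (fun k => by ring)
  · simp [hc]

lemma sum_if_hel_if_hel {t' m l : ℕ} (hml : m ≠ l) (hm : m + 1 < t') (hl : l + 1 < t')
    (c1 c2 : Prop) [Decidable c1] [Decidable c2] :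
    ∑ k : Fin t', (if c1 then hel m (k:ℕ) else 0) * (if c2 then hel l (k:ℕ) else 0) = 0 := by
  by_cases h1 : c1
  · by_cases h2 : c2
    · simp only [if_pos h1, if_pos h2]
      exact sum_fin_hel_mul' hml hm hl
    · simp [h2]
  · simp [h1]

lemma sum_if_hel_if_hel' {t' m l : ℕ} (c1 c2 : Prop) [Decidable c1] [Decidable c2]
    (hx : ¬(c1 ∧ c2)) :
    ∑ k : Fin t', (if c1 then hel m (k:ℕ) else 0) * (if c2 then hel l (k:ℕ) else 0) = 0 := by
  by_cases h1 : c1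
  · by_cases h2 : c2
    · exact absurd ⟨h1, h2⟩ hx
    · simp [h2]
  · simp [h1]

lemma PtP (hr : 2 ≤ r) (ht : 2 ≤ t) :
    (P r t)ᵀ * P r t = Matrix.diagonal (nu r t) := by
  have hm := qp_mul_qm hr ht
  have ha := qp_add_qm (r := r) (t := t)
  simp only [TT, DD] at hm ha
  ext c c'
  rw [Matrix.mul_apply, Matrix.diagonal_apply]
  simp only [Matrix.transpose_apply, P, Matrix.of_apply]
  rw [sum_W]
  rcases c with u | ⟨j₀, k₀⟩
  · obtain ⟨⟩ := u
    rcases c' with u' | ⟨j₁, k₁⟩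
    · obtain ⟨⟩ := u'
      rw [if_pos rfl, col_A]
      simp only [Sum.elim_inl, Sum.elim_inr, nu, Finset.sum_const, Finset.card_univ,
        Fintype.card_fin, nsmul_eq_mul]
      push_cast
      ring
    · rw [if_neg (by simp), col_A]
      by_cases hk1 : (k₁:ℕ) = t-1
      · by_cases hj1 : (j₁:ℕ) = r-1
        · rw [col_D r t j₁ k₁ hk1 hj1]
          simp only [Sum.elim_inl, Sum.elim_inr, Finset.sum_const, Finset.card_univ,
            Fintype.card_fin, nsmul_eq_mul]
          linear_combination ((r:ℝ)*t)*hm - ((r:ℝ)*t)^2*ha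
        · rw [col_C r t j₁ k₁ hk1 hj1]
          simp only [Sum.elim_inl, Sum.elim_inr, mul_zero, zero_add, Finset.sum_const,
            Finset.card_univ, Fintype.card_fin, nsmul_eq_mul]
          exact sum_hel_lin (kbound hj1) _ ((t:ℝ)*(qp r t - (r:ℝ)*t)) (fun j => by ring)
      · rw [col_B r t j₁ k₁ hk1]
        simp only [Sum.elim_inl, Sum.elim_inr, mul_zero, zero_add]
        rw [Finset.sum_congr rfl fun j _ => sum_mul_if_hel (kbound hk1) (j = j₁)
          (qp r t - (r:ℝ)*t)]
        simp
  · rcases c' with u' | ⟨j₁, k₁⟩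
    · obtain ⟨⟩ := u'
      rw [if_neg (by simp), col_A]
      by_cases hk0 : (k₀:ℕ) = t-1
      · by_cases hj0 : (j₀:ℕ) = r-1
        · rw [col_D r t j₀ k₀ hk0 hj0]
          simp only [Sum.elim_inl, Sum.elim_inr, Finset.sum_const, Finset.card_univ,
            Fintype.card_fin, nsmul_eq_mul]
          linear_combination ((r:ℝ)*t)*hm - ((r:ℝ)*t)^2*ha
        · rw [col_C r t j₀ k₀ hk0 hj0]
          simp only [Sum.elim_inl, Sum.elim_inr, zero_mul, zero_add, Finset.sum_const,
            Finset.card_univ, Fintype.card_fin, nsmul_eq_mul]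
          exact sum_hel_lin (kbound hj0) _ ((t:ℝ)*(qp r t - (r:ℝ)*t)) (fun j => by ring)
      · rw [col_B r t j₀ k₀ hk0]
        simp only [Sum.elim_inl, Sum.elim_inr, zero_mul, zero_add]
        rw [Finset.sum_congr rfl fun j _ => sum_if_hel_mul (kbound hk0) (j = j₀)
          (qp r t - (r:ℝ)*t)]
        simp
    · by_cases hk0 : (k₀:ℕ) = t-1
      · by_cases hj0 : (j₀:ℕ) = r-1
        · -- c is D
          by_cases hk1 : (k₁:ℕ) = t-1
          · by_cases hj1 : (j₁:ℕ) = r-1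
            · -- D D : diagonal
              have ej : j₀ = j₁ := Fin.ext (by rw [hj0, hj1])
              have ek : k₀ = k₁ := Fin.ext (by rw [hk0, hk1])
              subst ej; subst ek
              rw [if_pos rfl, col_D r t j₀ k₀ hk0 hj0]
              simp only [Sum.elim_inl, Sum.elim_inr, nu, if_pos hk0, if_pos hj0,
                Finset.sum_const, Finset.card_univ, Fintype.card_fin, nsmul_eq_mul]
              push_cast
              ring
            · -- D C
              have hne : ¬((Sum.inr (j₀,k₀) : W r t) = Sum.inr (j₁,k₁)) := by
                simp only [Sum.inr.injEq, Prod.mk.injEq, not_and]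
                intro hj _; exact hj1 (hj ▸ hj0)
              rw [if_neg hne, col_D r t j₀ k₀ hk0 hj0, col_C r t j₁ k₁ hk1 hj1]
              simp only [Sum.elim_inl, Sum.elim_inr, mul_zero, zero_add, Finset.sum_const,
                Finset.card_univ, Fintype.card_fin, nsmul_eq_mul]
              exact sum_hel_lin (kbound hj1) _ ((t:ℝ)*(qm r t - (r:ℝ)*t)) (fun j => by ring)
          · -- D B
            have hne : ¬((Sum.inr (j₀,k₀) : W r t) = Sum.inr (j₁,k₁)) := by
              simp only [Sum.inr.injEq, Prod.mk.injEq, not_and]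
              intro _ hk; exact hk1 (hk ▸ hk0)
            rw [if_neg hne, col_D r t j₀ k₀ hk0 hj0, col_B r t j₁ k₁ hk1]
            simp only [Sum.elim_inl, Sum.elim_inr, mul_zero, zero_add]
            rw [Finset.sum_congr rfl fun j _ => sum_mul_if_hel (kbound hk1) (j = j₁)
              (qm r t - (r:ℝ)*t)]
            simp
        · -- c is C
          by_cases hk1 : (k₁:ℕ) = t-1
          · by_cases hj1 : (j₁:ℕ) = r-1
            · -- C D
              have hne : ¬((Sum.inr (j₀,k₀) : W r t) = Sum.inr (j₁,k₁)) := by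
                simp only [Sum.inr.injEq, Prod.mk.injEq, not_and]
                intro hj _; exact hj0 (by rw [hj]; exact hj1)
              rw [if_neg hne, col_C r t j₀ k₀ hk0 hj0, col_D r t j₁ k₁ hk1 hj1]
              simp only [Sum.elim_inl, Sum.elim_inr, zero_mul, zero_add, Finset.sum_const,
                Finset.card_univ, Fintype.card_fin, nsmul_eq_mul]
              exact sum_hel_lin (kbound hj0) _ ((t:ℝ)*(qm r t - (r:ℝ)*t)) (fun j => by ring)
            · -- C C
              by_cases hjj : j₀ = j₁
              · have ek : k₀ = k₁ := Fin.ext (by rw [hk0, hk1])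
                subst hjj; subst ek
                rw [if_pos rfl, col_C r t j₀ k₀ hk0 hj0]
                simp only [Sum.elim_inl, Sum.elim_inr, nu, if_pos hk0, if_neg hj0,
                  Finset.sum_const, Finset.card_univ, Fintype.card_fin, nsmul_eq_mul, mul_zero,
                  zero_add]
                rw [← Finset.mul_sum, sum_fin_hel_sq (kbound hj0)]
              · have hne : ¬((Sum.inr (j₀,k₀) : W r t) = Sum.inr (j₁,k₁)) := by
                  simp only [Sum.inr.injEq, Prod.mk.injEq, not_and]
                  intro hj _; exact hjj hj
                rw [if_neg hne, col_C r t j₀ k₀ hk0 hj0, col_C r t j₁ k₁ hk1 hj1]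
                simp only [Sum.elim_inl, Sum.elim_inr, mul_zero, zero_add, Finset.sum_const,
                  Finset.card_univ, Fintype.card_fin, nsmul_eq_mul]
                rw [← Finset.mul_sum, sum_fin_hel_mul' (fun h => hjj (Fin.ext h))
                  (kbound hj0) (kbound hj1), mul_zero]
          · -- C B
            have hne : ¬((Sum.inr (j₀,k₀) : W r t) = Sum.inr (j₁,k₁)) := by
              simp only [Sum.inr.injEq, Prod.mk.injEq, not_and]
              intro _ hk; exact hk1 (hk ▸ hk0)
            rw [if_neg hne, col_C r t j₀ k₀ hk0 hj0, col_B r t j₁ k₁ hk1]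
            simp only [Sum.elim_inl, Sum.elim_inr, mul_zero, zero_add]
            rw [Finset.sum_congr rfl fun j _ => sum_mul_if_hel (kbound hk1) (j = j₁)
              (hel j₀ (j:ℕ))]
            simp
      · -- c is B
        rw [col_B r t j₀ k₀ hk0]
        by_cases hk1 : (k₁:ℕ) = t-1
        · have hne : ¬((Sum.inr (j₀,k₀) : W r t) = Sum.inr (j₁,k₁)) := by
            simp only [Sum.inr.injEq, Prod.mk.injEq, not_and]
            intro _ hk; exact hk0 (hk ▸ hk1)
          rw [if_neg hne]
          by_cases hj1 : (j₁:ℕ) = r-1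
          · -- B D
            rw [col_D r t j₁ k₁ hk1 hj1]
            simp only [Sum.elim_inl, Sum.elim_inr, zero_mul, zero_add]
            rw [Finset.sum_congr rfl fun j _ => sum_if_hel_mul (kbound hk0) (j = j₀)
              (qm r t - (r:ℝ)*t)]
            simp
          · -- B C
            rw [col_C r t j₁ k₁ hk1 hj1]
            simp only [Sum.elim_inl, Sum.elim_inr, zero_mul, zero_add]
            rw [Finset.sum_congr rfl fun j _ => sum_if_hel_mul (kbound hk0) (j = j₀)
              (hel j₁ (j:ℕ))]
            simp
        · -- B B
          rw [col_B r t j₁ k₁ hk1]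
          by_cases hjj : j₀ = j₁
          · by_cases hkk : k₀ = k₁
            · subst hjj; subst hkk
              rw [if_pos rfl]
              simp only [Sum.elim_inl, Sum.elim_inr, zero_mul, zero_add]
              have hinner : ∀ j : Fin r,
                  ∑ k : Fin t, (if j = j₀ then hel (k₀:ℕ) ((k : Fin t):ℕ) else 0) *
                    (if j = j₀ then hel (k₀:ℕ) ((k : Fin t):ℕ) else 0) =
                  if j = j₀ then (((k₀:ℕ):ℝ)+1) + (((k₀:ℕ):ℝ)+1)^2 else 0 := by
                intro j
                by_cases hjj : j = j₀
                · simp only [if_pos hjj]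
                  exact sum_fin_hel_sq (kbound hk0)
                · simp [hjj]
              rw [Finset.sum_congr rfl fun j _ => hinner j, Finset.sum_ite_eq' Finset.univ j₀]
              simp only [Finset.mem_univ, if_true, nu, Sum.elim_inr, if_neg hk0]
            · have hne : ¬((Sum.inr (j₀,k₀) : W r t) = Sum.inr (j₁,k₁)) := by
                simp only [Sum.inr.injEq, Prod.mk.injEq, not_and]
                intro _ hk; exact hkk hk
              rw [if_neg hne]
              simp only [Sum.elim_inl, Sum.elim_inr, zero_mul, zero_add]
              rw [Finset.sum_congr rfl fun j _ => sum_if_hel_if_hel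
                (fun h => hkk (Fin.ext h)) (kbound hk0) (kbound hk1) (j = j₀) (j = j₁)]
              simp
          · have hne : ¬((Sum.inr (j₀,k₀) : W r t) = Sum.inr (j₁,k₁)) := by
              simp only [Sum.inr.injEq, Prod.mk.injEq, not_and]
              intro hj _; exact hjj hj
            rw [if_neg hne]
            simp only [Sum.elim_inl, Sum.elim_inr, zero_mul, zero_add]
            rw [Finset.sum_congr rfl fun j _ => sum_if_hel_if_hel' (j = j₀) (j = j₁)
              (fun ⟨h1, h2⟩ => hjj (h1 ▸ h2 ▸ rfl))]
            simp

lemma nu_ne_zero (hr : 2 ≤ r) (ht : 2 ≤ t) (c : W r t) : nu r t c ≠ 0 := by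
  have hr' : (2:ℝ) ≤ r := by exact_mod_cast hr
  have ht' : (2:ℝ) ≤ t := by exact_mod_cast ht
  have hrt : (0:ℝ) < (r:ℝ)*t := by nlinarith
  rcases c with u | ⟨j, k⟩
  · simp only [nu, Sum.elim_inl]
    nlinarith [sq_nonneg (qp r t - (r:ℝ)*t), sq_nonneg ((r:ℝ)*t)]
  · simp only [nu, Sum.elim_inr]
    split_ifs
    · nlinarith [sq_nonneg (qm r t - (r:ℝ)*t), sq_nonneg ((r:ℝ)*t)]
    · have hj : (0:ℝ) ≤ ((j:ℕ):ℝ) := Nat.cast_nonneg _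
      nlinarith
    · have hk : (0:ℝ) ≤ ((k:ℕ):ℝ) := Nat.cast_nonneg _
      nlinarith

lemma det_P_ne_zero (hr : 2 ≤ r) (ht : 2 ≤ t) : (P r t).det ≠ 0 := by
  have h := congrArg Matrix.det (PtP r t hr ht)
  rw [Matrix.det_mul, Matrix.det_transpose, Matrix.det_diagonal] at h
  intro hdet
  rw [hdet, mul_zero] at h
  exact Finset.prod_ne_zero_iff.mpr (fun c _ => nu_ne_zero r t hr ht c) h.symm

end Orth

section Transfer

lemma map_univ_equiv_val {α β : Type*} [Fintype α] [Fintype β] (e : α ≃ β) (g : β → ℝ) :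
    (Finset.univ.val.map (fun a => g (e a))) = Finset.univ.val.map g := by
  have h : (Finset.univ.map e.toEmbedding).val = (Finset.univ : Finset β).val :=
    congrArg Finset.val (Finset.map_univ_equiv e)
  rw [Finset.map_val] at h
  simp only [Equiv.coe_toEmbedding] at h
  rw [show (fun a => g (e a)) = g ∘ (e : α → β) from rfl, ← Multiset.map_map, h]

lemma count_transfer {α β : Type*} [Fintype α] [Fintype β] (f : α → ℝ) (g : β → ℝ)
    (h : Finset.univ.val.map f = Finset.univ.val.map g) (Pr : ℝ → Prop) [DecidablePred Pr] :
    (Finset.univ.filter fun a => Pr (f a)).card = (Finset.univ.filter fun b => Pr (g b)).card := by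
  have h2 := congrArg (Multiset.countP Pr) h
  rw [Multiset.countP_map, Multiset.countP_map] at h2
  simpa [Finset.card, Finset.filter] using h2

lemma mono_at_le {N : ℕ} (hN : 2 ≤ N) {g : Fin N → ℝ} (hg : Monotone g) {q : ℝ}
    (hc : (Finset.univ.filter fun j => q < g j).card ≤ 1) : g ⟨N-2, by omega⟩ ≤ q := by
  by_contra hgt
  push_neg at hgt
  have hmem : ({⟨N-2, by omega⟩, ⟨N-1, by omega⟩} : Finset (Fin N)) ⊆
      Finset.univ.filter fun j => q < g j := by
    intro j hj
    simp only [Finset.mem_insert, Finset.mem_singleton] at hj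
    rcases hj with rfl | rfl
    · exact Finset.mem_filter.mpr ⟨Finset.mem_univ _, hgt⟩
    · refine Finset.mem_filter.mpr ⟨Finset.mem_univ _, lt_of_lt_of_le hgt (hg ?_)⟩
      simp only [Fin.le_def]
      omega
  have hcard2 : ({⟨N-2, by omega⟩, ⟨N-1, by omega⟩} : Finset (Fin N)).card = 2 :=
    Finset.card_pair (by simp only [ne_eq, Fin.mk.injEq]; omega)
  have := Finset.card_le_card hmem
  omega

lemma mono_at_ge {N : ℕ} (hN : 2 ≤ N) {g : Fin N → ℝ} (hg : Monotone g) {q : ℝ}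
    (hc : 2 ≤ (Finset.univ.filter fun j => q ≤ g j).card) : q ≤ g ⟨N-2, by omega⟩ := by
  by_contra hlt
  push_neg at hlt
  have hsub : (Finset.univ.filter fun j => q ≤ g j) ⊆ {⟨N-1, by omega⟩} := by
    intro j hj
    simp only [Finset.mem_filter] at hj
    simp only [Finset.mem_singleton]
    by_contra hne
    have hj2 : j ≤ (⟨N-2, by omega⟩ : Fin N) := by
      have h3 := j.isLt
      have h4 : (j : ℕ) ≠ N-1 := fun h => hne (Fin.ext h)
      simp only [Fin.le_def]
      omega
    have := hj.2.trans (hg hj2)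
    linarith
  have := Finset.card_le_card hsub
  simp only [Finset.card_singleton] at this
  omega

lemma exists_equiv (r t : ℕ) (p : Fin (r*t+1) → Fin (r+1))
    (h0 : {v | p v = 0}.ncard = 1) (hi : ∀ i : Fin (r+1), i ≠ 0 → {v | p v = i}.ncard = t) :
    ∃ e : W r t ≃ Fin (r*t+1), ∀ x, p (e x) = pW r t x := by
  obtain ⟨v₀, hv₀⟩ := Set.ncard_eq_one.mp h0
  have hpv₀ : p v₀ = 0 := by
    have : v₀ ∈ {v | p v = 0} := hv₀ ▸ Set.mem_singleton v₀
    exact this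
  have hcard : ∀ j : Fin r, Fintype.card {v // p v = Fin.succ j} = t := by
    intro j
    have h := hi (Fin.succ j) (Fin.succ_ne_zero j)
    rwa [← Nat.card_coe_set_eq, Nat.card_eq_fintype_card] at h
  have ej : ∀ j : Fin r, Fin t ≃ {v // p v = Fin.succ j} :=
    fun j => (Fintype.equivFinOfCardEq (hcard j)).symm
  have hbij : Function.Bijective
      (Sum.elim (fun _ : Unit => v₀) (fun jk : Fin r × Fin t => ((ej jk.1) jk.2 : Fin (r*t+1)))) := by
    constructor
    · intro x y hxy
      rcases x with u | ⟨j, k⟩ <;> rcases y with u' | ⟨j', k'⟩ <;>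
        simp only [Sum.elim_inl, Sum.elim_inr] at hxy
      · rfl
      · exfalso
        have : p v₀ = p ((ej j') k' : Fin (r*t+1)) := congrArg p hxy
        rw [hpv₀, ((ej j') k').2] at this
        exact Fin.succ_ne_zero j' this.symm
      · exfalso
        have : p ((ej j) k : Fin (r*t+1)) = p v₀ := congrArg p hxy
        rw [hpv₀, ((ej j) k).2] at this
        exact Fin.succ_ne_zero j this
      · have hjj : Fin.succ j = Fin.succ j' := by
          rw [← ((ej j) k).2, ← ((ej j') k').2, hxy]
        have hj : j = j' := Fin.succ_inj.mp hjj
        subst hj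
        have hk : ((ej j) k) = ((ej j) k') := Subtype.ext hxy
        rw [(ej j).apply_eq_iff_eq] at hk
        rw [hk]
    · intro v
      by_cases hv : p v = 0
      · refine ⟨Sum.inl (), ?_⟩
        have : v ∈ ({v₀} : Set _) := hv₀ ▸ hv
        exact (Set.mem_singleton_iff.mp this).symm
      · obtain ⟨j, hj⟩ := Fin.exists_succ_eq_of_ne_zero hv
        refine ⟨Sum.inr (j, (ej j).symm ⟨v, hj.symm⟩), ?_⟩
        simp
  refine ⟨Equiv.ofBijective _ hbij, ?_⟩
  intro x
  rcases x with u | ⟨j, k⟩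
  · simpa [Equiv.ofBijective, pW] using hpv₀
  · simpa [Equiv.ofBijective, pW] using ((ej j) k).2

end Transfer


end K1tt

/-- Let `r, t ≥ 2` with `t > 2 + 1/(r-1)` and let `G = K_{1,t,…,t}` be the complete
`(r+1)`-partite graph with one part of size `1` and `r` parts of size `t`. Then
`q₂(G) = (3tr - 2t + 1 - √(t²(r-2)² + 2t(3r-2) + 1)) / 2 > δ(G)`, where
`δ(G) = t(r-1) + 1`. -/
theorem q2_of_K1tt_large_t (r t : ℕ) (hr : 2 ≤ r) (ht : 2 ≤ t)
    (htr : 2 + 1 / ((r : ℝ) - 1) < (t : ℝ))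
    (G : SimpleGraph (Fin (r * t + 1))) [DecidableRel G.Adj]
    (p : Fin (r * t + 1) → Fin (r + 1))
    (hp : IsCompleteMultipartiteWith G p)
    (h0 : {v | p v = 0}.ncard = 1)
    (hi : ∀ i : Fin (r + 1), i ≠ 0 → {v | p v = i}.ncard = t) :
    qEig G 2 = (3 * (t : ℝ) * r - 2 * t + 1 -
        Real.sqrt ((t : ℝ) ^ 2 * ((r : ℝ) - 2) ^ 2 + 2 * t * (3 * r - 2) + 1)) / 2 ∧
    (G.minDegree : ℝ) < qEig G 2 ∧
    G.minDegree = t * (r - 1) + 1 := by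
  classical
  obtain ⟨e, he⟩ := K1tt.exists_equiv r t p h0 hi
  have hr1 : 1 ≤ r := by omega
  have hrt4 : 4 ≤ r * t := Nat.mul_le_mul hr ht
  have hmulsub : t * (r - 1) + t = t * r := by
    rw [← Nat.mul_succ]
    congr 1
    omega
  have hcomm : t * r = r * t := Nat.mul_comm t r
  -- fiber cardinalities
  have hfib : ∀ i : Fin (r+1), (Finset.univ.filter fun v => p v = i).card = {v | p v = i}.ncard := by
    intro i
    rw [Set.ncard_eq_toFinset_card', Set.toFinset_setOf]
  -- degrees
  have hdeg : ∀ x : K1tt.W r t, G.degree (e x) =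
      (r*t+1) - (Finset.univ.filter fun u => p u = p (e x)).card := by
    intro x
    rw [SimpleGraph.degree, SimpleGraph.neighborFinset_eq_filter]
    have hfil : Finset.univ.filter (G.Adj (e x)) =
        Finset.univ.filter (fun u => ¬ (p u = p (e x))) := by
      apply Finset.filter_congr
      intro u _
      rw [hp (e x) u]
      exact ne_comm
    rw [hfil]
    have hsum := Finset.card_filter_add_card_filter_not
      (s := (Finset.univ : Finset (Fin (r*t+1)))) (p := fun u => p u = p (e x))
    rw [Finset.card_univ, Fintype.card_fin] at hsum
    omega
  have hdeg1 : ∀ u : Unit, G.degree (e (Sum.inl u)) = r * t := by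
    intro u
    rw [hdeg, he, K1tt.pW_inl, hfib, h0]
    omega
  have hdeg2 : ∀ j k, G.degree (e (Sum.inr (j, k))) = t * (r-1) + 1 := by
    intro j k
    rw [hdeg, he, K1tt.pW_inr, hfib, hi _ (Fin.succ_ne_zero j)]
    omega
  -- minimum degree
  have hmd : G.minDegree = t * (r - 1) + 1 := by
    apply le_antisymm
    · have h := G.minDegree_le_degree (e (Sum.inr (⟨0, by omega⟩, ⟨0, by omega⟩)))
      rwa [hdeg2] at h
    · apply SimpleGraph.le_minDegree_of_forall_le_degree
      intro v
      obtain ⟨x, rfl⟩ := e.surjective v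
      rcases x with u | ⟨j, k⟩
      · rw [hdeg1]
        omega
      · rw [hdeg2]
  -- identify the signless Laplacian
  have hQ' : signlessLap G = (K1tt.Q' r t).submatrix ⇑e.symm ⇑e.symm := by
    ext v w
    obtain ⟨x, rfl⟩ := e.surjective v
    obtain ⟨y, rfl⟩ := e.surjective w
    simp only [signlessLap, Matrix.add_apply, Matrix.submatrix_apply, Equiv.symm_apply_apply,
      SimpleGraph.degMatrix, Matrix.diagonal_apply, SimpleGraph.adjMatrix_apply,
      K1tt.Q', Matrix.of_apply]
    congr 1
    · by_cases hxy : x = y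
      · subst hxy
        rw [if_pos rfl, if_pos rfl]
        rcases x with u | ⟨j, k⟩
        · rw [hdeg1]
          simp [Sum.elim_inl]
        · rw [hdeg2]
          simp only [Sum.elim_inr, K1tt.a1]
          push_cast [Nat.cast_sub hr1]
          ring
      · rw [if_neg (fun h => hxy (e.injective h)), if_neg hxy]
    · have hiff : G.Adj (e x) (e y) ↔ ¬ (K1tt.pW r t x = K1tt.pW r t y) := by
        rw [hp (e x) (e y), he, he]
      exact if_congr hiff rfl rfl
  -- hermitian
  have hsym : (signlessLap G).IsHermitian := by
    have h1 : (G.degMatrix ℝ).IsHermitian := Matrix.isHermitian_diagonal _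
    have h2 : (G.adjMatrix ℝ).IsHermitian := by
      show _ᴴ = _
      ext i j
      by_cases h : G.Adj j i
      · simp [Matrix.conjTranspose_apply, h, h.symm]
      · have h' : ¬ G.Adj i j := fun hh => h hh.symm
        simp [Matrix.conjTranspose_apply, h, h']
    exact h1.add h2
  -- determinant identity, combinatorial side
  have hdetQ : ∀ x : ℝ, ((x • (1 : Matrix (Fin (r*t+1)) (Fin (r*t+1)) ℝ)) - signlessLap G).det
      = ∏ c : K1tt.W r t, (x - K1tt.d r t c) := by
    intro x
    rw [hQ']
    have h1 : x • (1 : Matrix (Fin (r*t+1)) (Fin (r*t+1)) ℝ) - (K1tt.Q' r t).submatrix ⇑e.symm ⇑e.symm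
        = (x • 1 - K1tt.Q' r t).submatrix ⇑e.symm ⇑e.symm := by
      ext v w
      simp only [Matrix.sub_apply, Matrix.smul_apply, Matrix.one_apply, Matrix.submatrix_apply,
        smul_eq_mul]
      have hvw : (v = w) ↔ (e.symm v = e.symm w) := (Equiv.apply_eq_iff_eq e.symm).symm
      rw [if_congr hvw rfl rfl]
    rw [h1, Matrix.det_submatrix_equiv_self]
    have h2 : (x • (1 : Matrix (K1tt.W r t) (K1tt.W r t) ℝ) - K1tt.Q' r t) * K1tt.P r t
        = K1tt.P r t * (x • 1 - Matrix.diagonal (K1tt.d r t)) := by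
      rw [Matrix.sub_mul, Matrix.mul_sub, K1tt.mul_eq r t hr ht, Matrix.smul_mul,
        Matrix.one_mul, Matrix.mul_smul, Matrix.mul_one]
    have h3 := congrArg Matrix.det h2
    rw [Matrix.det_mul, Matrix.det_mul] at h3
    have h4 : (x • (1 : Matrix (K1tt.W r t) (K1tt.W r t) ℝ) - Matrix.diagonal (K1tt.d r t))
        = Matrix.diagonal (fun c => x - K1tt.d r t c) := by
      ext a b
      by_cases hab : a = b <;> simp [Matrix.diagonal_apply, hab, Matrix.one_apply]
    rw [h4, Matrix.det_diagonal] at h3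
    apply mul_right_cancel₀ (K1tt.det_P_ne_zero r t hr ht)
    rw [h3, mul_comm]
  -- determinant identity, spectral side
  have hspec : ∀ x : ℝ, ((x • (1 : Matrix (Fin (r*t+1)) (Fin (r*t+1)) ℝ)) - signlessLap G).det
      = ∏ v, (x - hsym.eigenvalues v) := by
    intro x
    set U : Matrix (Fin (r*t+1)) (Fin (r*t+1)) ℝ :=
      (Matrix.IsHermitian.eigenvectorUnitary hsym : Matrix (Fin (r*t+1)) (Fin (r*t+1)) ℝ)
      with hUdef
    have hU1 : U * star U = 1 :=
      Matrix.mem_unitaryGroup_iff.mp (Matrix.IsHermitian.eigenvectorUnitary hsym).2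
    have hU2 : star U * U = 1 :=
      Matrix.mem_unitaryGroup_iff'.mp (Matrix.IsHermitian.eigenvectorUnitary hsym).2
    have hA := hsym.spectral_theorem
    have hid : (RCLike.ofReal ∘ hsym.eigenvalues : Fin (r*t+1) → ℝ) = hsym.eigenvalues := by
      funext v
      simp [RCLike.ofReal_real_eq_id]
    rw [hid] at hA
    have hsm : x • (1 : Matrix (Fin (r*t+1)) (Fin (r*t+1)) ℝ) =
        U * (x • 1) * star U := by
      rw [Matrix.mul_smul, Matrix.mul_one, Matrix.smul_mul, hU1]
    have hfact : (x • (1 : Matrix (Fin (r*t+1)) (Fin (r*t+1)) ℝ)) - signlessLap G =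
        U * (x • 1 - Matrix.diagonal hsym.eigenvalues) * star U := by
      conv_lhs => rw [hsm, hA, Unitary.conjStarAlgAut_apply]
      rw [Matrix.mul_sub, Matrix.sub_mul]
    rw [hfact, Matrix.det_mul, Matrix.det_mul]
    have hdu : (star U).det * U.det = 1 := by
      rw [← Matrix.det_mul, hU2, Matrix.det_one]
    have h4 : (x • (1 : Matrix (Fin (r*t+1)) (Fin (r*t+1)) ℝ) - Matrix.diagonal hsym.eigenvalues)
        = Matrix.diagonal (fun v => x - hsym.eigenvalues v) := by
      ext a b
      by_cases hab : a = b <;> simp [Matrix.diagonal_apply, hab, Matrix.one_apply]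
    rw [h4, Matrix.det_diagonal]
    linear_combination (∏ v, (x - hsym.eigenvalues v)) * hdu
  -- eigenvalue multiset
  have hpoly : (Finset.univ.val.map hsym.eigenvalues) = (Finset.univ.val.map (K1tt.d r t)) := by
    have hprod : (∏ v, (Polynomial.X - Polynomial.C (hsym.eigenvalues v)))
        = ∏ c, (Polynomial.X - Polynomial.C (K1tt.d r t c)) := by
      apply Polynomial.funext
      intro x
      rw [Polynomial.eval_prod, Polynomial.eval_prod]
      simp only [Polynomial.eval_sub, Polynomial.eval_X, Polynomial.eval_C]
      rw [← hspec x, hdetQ x]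
    have h1 : ∀ {γ : Type} [inst : Fintype γ] (f : γ → ℝ),
        (∏ a : γ, (Polynomial.X - Polynomial.C (f a)))
        = (Multiset.map (fun z => Polynomial.X - Polynomial.C z) (Finset.univ.val.map f)).prod := by
      intro γ _ f
      rw [Finset.prod_eq_multiset_prod, Multiset.map_map]
      rfl
    rw [h1, h1] at hprod
    have h2 := congrArg Polynomial.roots hprod
    rwa [Polynomial.roots_multiset_prod_X_sub_C, Polynomial.roots_multiset_prod_X_sub_C] at h2
  -- arithmetic facts
  have hqmp := K1tt.qm_lt_qp hr ht
  have ha1 := K1tt.a1_lt_qm hr ht htr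
  have ha2 := K1tt.a2_lt_qm hr ht htr
  -- counting on the W side
  have hWlt : (Finset.univ.filter fun c : K1tt.W r t => K1tt.qm r t < K1tt.d r t c)
      = {Sum.inl ()} := by
    ext c
    simp only [Finset.mem_filter, Finset.mem_univ, true_and, Finset.mem_singleton]
    rcases c with u | ⟨j, k⟩
    · exact iff_of_true (by simpa [K1tt.d] using hqmp) rfl
    · apply iff_of_false
      · simp only [K1tt.d, Sum.elim_inr]
        split_ifs
        · exact lt_irrefl _
        · exact not_lt.mpr (le_of_lt ha2)
        · exact not_lt.mpr (le_of_lt ha1)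
      · simp
  have hWle : (Finset.univ.filter fun c : K1tt.W r t => K1tt.qm r t ≤ K1tt.d r t c)
      = {Sum.inl (), Sum.inr (⟨r-1, by omega⟩, ⟨t-1, by omega⟩)} := by
    ext c
    simp only [Finset.mem_filter, Finset.mem_univ, true_and, Finset.mem_insert,
      Finset.mem_singleton]
    rcases c with u | ⟨j, k⟩
    · exact iff_of_true (by simpa [K1tt.d] using le_of_lt hqmp) (Or.inl rfl)
    · simp only [K1tt.d, Sum.elim_inr]
      constructor
      · intro hle
        by_cases hk : (k:ℕ) = t-1
        · by_cases hj : (j:ℕ) = r-1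
          · right
            have hj' : j = (⟨r-1, by omega⟩ : Fin r) := Fin.ext (by simpa using hj)
            have hk' : k = (⟨t-1, by omega⟩ : Fin t) := Fin.ext (by simpa using hk)
            rw [hj', hk']
          · rw [if_pos hk, if_neg hj] at hle
            exact absurd hle (not_le.mpr ha2)
        · rw [if_neg hk] at hle
          exact absurd hle (not_le.mpr ha1)
      · intro hor
        rcases hor with h | h
        · exact absurd h (by simp)
        · obtain ⟨hj, hk⟩ : j = (⟨r-1, by omega⟩ : Fin r) ∧ k = (⟨t-1, by omega⟩ : Fin t) := by
            simpa [Prod.ext_iff] using h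
          subst hj; subst hk
          rw [if_pos (by simp), if_pos (by simp)]
  -- transfer to the sorted eigenvalue tuple
  have hc2 : 2 - 1 < Fintype.card (Fin (r*t+1)) := by
    rw [Fintype.card_fin]; omega
  set N := Fintype.card (Fin (r*t+1)) with hNdef
  have hNval : N = r*t+1 := Fintype.card_fin _
  set f : Fin N → ℝ := hsym.eigenvalues ∘ ⇑(Fintype.equivFin (Fin (r*t+1))).symm with hfdef
  have hmapf : Finset.univ.val.map f = Finset.univ.val.map (K1tt.d r t) := by
    rw [hfdef]
    exact (K1tt.map_univ_equiv_val (Fintype.equivFin (Fin (r*t+1))).symm hsym.eigenvalues).trans hpoly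
  have hmapg : Finset.univ.val.map (f ∘ ⇑(Tuple.sort f)) = Finset.univ.val.map (K1tt.d r t) :=
    (K1tt.map_univ_equiv_val (Tuple.sort f) f).trans hmapf
  have hmono := Tuple.monotone_sort f
  have hcnt1 : (Finset.univ.filter fun i : Fin N => K1tt.qm r t < (f ∘ ⇑(Tuple.sort f)) i).card = 1 := by
    rw [K1tt.count_transfer (f ∘ ⇑(Tuple.sort f)) (K1tt.d r t) hmapg (fun z => K1tt.qm r t < z),
      hWlt, Finset.card_singleton]
  have hcnt2 : (Finset.univ.filter fun i : Fin N => K1tt.qm r t ≤ (f ∘ ⇑(Tuple.sort f)) i).card = 2 := by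
    rw [K1tt.count_transfer (f ∘ ⇑(Tuple.sort f)) (K1tt.d r t) hmapg (fun z => K1tt.qm r t ≤ z),
      hWle]
    rw [Finset.card_insert_of_notMem (by simp), Finset.card_singleton]
  have hN2 : 2 ≤ N := by omega
  have hval : (f ∘ ⇑(Tuple.sort f)) ⟨N-2, by omega⟩ = K1tt.qm r t := by
    apply le_antisymm
    · exact K1tt.mono_at_le hN2 hmono (le_of_eq hcnt1)
    · exact K1tt.mono_at_ge hN2 hmono (ge_of_eq hcnt2)
  have hrev : (Fin.rev ⟨2-1, hc2⟩ : Fin N) = ⟨N-2, by omega⟩ := by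
    apply Fin.ext
    rw [Fin.val_rev]
  have hq2 : qEig G 2 = K1tt.qm r t := by
    rw [qEig, kthEig, dif_pos hsym, dif_pos hc2]
    rw [hrev]
    exact hval
  refine ⟨?_, ?_, hmd⟩
  · rw [hq2]
    simp only [K1tt.qm, K1tt.TT, K1tt.Dl]
  · rw [hq2, hmd]
    simp only [K1tt.a1] at ha1
    push_cast [Nat.cast_sub hr1]
    nlinarith [ha1]
end
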